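/- arXiv:2603.18517 — 4 statements merged into one kernel-verified Lean document; each statement's English description precedes it below -/
import Mathlib

section
/- Let k ≥ 2 and n ≥ 2k be integers. Let B = K_{k-1,n-1} ⊔ \widehat{K_{n-k+1,1}} (the balanced bipartite graph on parts X, Y of size n each, where X = X₁ ∪ X₂ with |X₁| = k-1, |X₂| = n-k+1 and Y = Y₁ ∪ Y₂ with |Y₁| = n-1, |Y₂| = 1, and xy is an edge iff x ∈ X₁ or y ∈ Y₁, except exactly one vertex of X₂ is joined to the vertex of Y₂). Then the spectral radius ρ(B) is the largest root of x⁴ − (n(n−1) + (k−1))x² + (n−1)(n−k+1)(k−1) = 0. -/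
open SimpleGraph

/-- Spectral radius: supremum of the (real) eigenvalues of the adjacency matrix. -/
noncomputable def specRad {V : Type*} [Fintype V] [DecidableEq V] (G : SimpleGraph V) : ℝ :=
  sSup {x : ℝ | Module.End.HasEigenvalue
    (Matrix.toLin' (@SimpleGraph.adjMatrix ℝ V G (Classical.decRel _) _ _)) x}

/-- The map on edges used by the `(x,y)`-shift: replace `y` by `x`. -/
def shiftMap {V : Type*} [DecidableEq V] (x y : V) (e : Sym2 V) : Sym2 V :=
  Sym2.map (fun v => if v = y then x else v) e

open scoped Classical in
/-- The `(x,y)`-shift of a graph. -/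
noncomputable def shiftGraph {V : Type*} [DecidableEq V] (G : SimpleGraph V) (x y : V) :
    SimpleGraph V :=
  SimpleGraph.fromEdgeSet
    ((fun e => if y ∈ e ∧ x ∉ e ∧ shiftMap x y e ∉ G.edgeSet then shiftMap x y e else e) ''
      G.edgeSet)

/-- Balanced bipartite graph on `[2n]` with parts `X = {0,…,n-1}`, `Y = {n,…,2n-1}`:
`x ∈ X` is adjacent to `y ∈ Y` iff `x < a` or `y < 2n - b`.
`bipG n (k-1) 1 = K_{k-1,n-1} ⊔ quasi-complement of K_{n-k+1,1}`. -/
def bipG (n a b : ℕ) : SimpleGraph (Fin (2*n)) where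
  Adj u v := (u.val < n ∧ n ≤ v.val ∧ (u.val < a ∨ v.val < 2*n - b)) ∨
             (v.val < n ∧ n ≤ u.val ∧ (v.val < a ∨ u.val < 2*n - b))
  symm := ⟨by intro u v h; tauto⟩
  loopless := ⟨by intro u h; rcases h with ⟨h1, h2, -⟩ | ⟨h1, h2, -⟩ <;> omega⟩

/-- `H` is a rainbow `k`-factor of the family `F`. -/
def IsRainbowFactor {V : Type*} {m : ℕ} (F : Fin m → SimpleGraph V) (k : ℕ)
    (H : SimpleGraph V) : Prop :=
  (∀ v, (H.neighborSet v).ncard = k) ∧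
  ∃ φ : H.edgeSet ≃ Fin m, ∀ e : H.edgeSet, (e : Sym2 V) ∈ (F (φ e)).edgeSet

lemma bipG_adj (n a b : ℕ) (u v : Fin (2*n)) : (bipG n a b).Adj u v ↔
    ((u.val < n ∧ n ≤ v.val ∧ (u.val < a ∨ v.val < 2*n - b)) ∨
     (v.val < n ∧ n ≤ u.val ∧ (v.val < a ∨ u.val < 2*n - b))) := Iff.rfl

lemma sum_ite_const {N : ℕ} (a b : ℕ) (hb : b ≤ N) (c : ℝ) (f : Fin N → ℝ)
    (hf : ∀ x : Fin N, a ≤ x.val → x.val < b → f x = c) :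
    ∑ x : Fin N, (if a ≤ x.val ∧ x.val < b then f x else 0) = ((b - a : ℕ) : ℝ) * c := by
  have h1 : ∀ x : Fin N, (if a ≤ x.val ∧ x.val < b then f x else 0)
      = (fun i : ℕ => if a ≤ i ∧ i < b then c else 0) x.val := by
    intro x; by_cases h : a ≤ x.val ∧ x.val < b
    · simp only [if_pos h]; exact hf x h.1 h.2
    · simp only [if_neg h]
  rw [Finset.sum_congr rfl (fun x _ => h1 x)]
  rw [Fin.sum_univ_eq_sum_range (fun i => if a ≤ i ∧ i < b then c else 0) N]
  rw [← Finset.sum_filter]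
  have h2 : (Finset.range N).filter (fun i => a ≤ i ∧ i < b) = Finset.Ico a b := by
    ext i; simp only [Finset.mem_filter, Finset.mem_range, Finset.mem_Ico]; omega
  rw [h2, Finset.sum_const, Nat.card_Ico, nsmul_eq_mul]

lemma key (n k : ℕ) (hk : 2 ≤ k) (hn : 2*k ≤ n) (v : Fin (2*n) → ℝ) (u : Fin (2*n)) :
    (Matrix.toLin' (@SimpleGraph.adjMatrix ℝ (Fin (2*n)) (bipG n (k-1) 1)
        (Classical.decRel _) _ _)) v u =
    if u.val < k-1 then
      (∑ x : Fin (2*n), (if n ≤ x.val ∧ x.val < 2*n-1 then v x else 0)) +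
      (∑ x : Fin (2*n), (if 2*n-1 ≤ x.val ∧ x.val < 2*n then v x else 0))
    else if u.val < n then
      (∑ x : Fin (2*n), (if n ≤ x.val ∧ x.val < 2*n-1 then v x else 0))
    else if u.val < 2*n-1 then
      (∑ x : Fin (2*n), (if 0 ≤ x.val ∧ x.val < k-1 then v x else 0)) +
      (∑ x : Fin (2*n), (if k-1 ≤ x.val ∧ x.val < n then v x else 0))
    else
      (∑ x : Fin (2*n), (if 0 ≤ x.val ∧ x.val < k-1 then v x else 0)) := by
  letI : DecidableRel (bipG n (k-1) 1).Adj := Classical.decRel _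
  rw [Matrix.toLin'_apply]
  have hmv : (Matrix.mulVec (@SimpleGraph.adjMatrix ℝ (Fin (2*n)) (bipG n (k-1) 1)
        (Classical.decRel _) _ _) v) u
      = ∑ x : Fin (2*n), (if (bipG n (k-1) 1).Adj u x then v x else 0) := by
    simp [Matrix.mulVec, dotProduct, SimpleGraph.adjMatrix_apply, ite_mul, one_mul,
      zero_mul]
  rw [hmv]
  have hu2 := u.isLt
  by_cases h1 : u.val < k-1
  · rw [if_pos h1, ← Finset.sum_add_distrib]
    refine Finset.sum_congr rfl fun x _ => ?_
    have hx2 := x.isLt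
    simp only [bipG_adj]
    split_ifs <;> first | omega | simp
  · rw [if_neg h1]
    by_cases h2 : u.val < n
    · rw [if_pos h2]
      refine Finset.sum_congr rfl fun x _ => ?_
      have hx2 := x.isLt
      simp only [bipG_adj]
      split_ifs <;> first | omega | simp
    · rw [if_neg h2]
      by_cases h3 : u.val < 2*n-1
      · rw [if_pos h3, ← Finset.sum_add_distrib]
        refine Finset.sum_congr rfl fun x _ => ?_
        have hx2 := x.isLt
        simp only [bipG_adj]
        split_ifs <;> first | omega | simp
      · rw [if_neg h3]
        refine Finset.sum_congr rfl fun x _ => ?_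
        have hx2 := x.isLt
        simp only [bipG_adj]
        split_ifs <;> first | omega | simp

def vecB (n k : ℕ) (μ : ℝ) : Fin (2*n) → ℝ := fun u =>
  if u.val < k-1 then ((n:ℝ)-1)*μ^2
  else if u.val < n then ((n:ℝ)-1)*(μ^2-((k:ℝ)-1))
  else if u.val < 2*n-1 then μ*(μ^2-((k:ℝ)-1))
  else ((k:ℝ)-1)*((n:ℝ)-1)*μ

lemma casts (n k : ℕ) (hk : 2 ≤ k) (hn : 2*k ≤ n) :
    ((2*n-1-n : ℕ) : ℝ) = (n:ℝ)-1 ∧ ((2*n-(2*n-1) : ℕ) : ℝ) = 1 ∧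
    ((k-1-0 : ℕ) : ℝ) = (k:ℝ)-1 ∧ ((n-(k-1) : ℕ) : ℝ) = (n:ℝ)-(k:ℝ)+1 := by
  refine ⟨?_, ?_, ?_, ?_⟩
  · have h : 2*n-1-n = n-1 := by omega
    rw [h, Nat.cast_sub (by omega)]; simp
  · have h : 2*n-(2*n-1) = 1 := by omega
    rw [h]; simp
  · have h : k-1-0 = k-1 := by omega
    rw [h, Nat.cast_sub (by omega)]; simp
  · have h : n-(k-1) = n+1-k := by omega
    rw [h, Nat.cast_sub (by omega)]; push_cast; ring

lemma hasEigen (n k : ℕ) (hk : 2 ≤ k) (hn : 2*k ≤ n) (μ : ℝ)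
    (hroot : μ^4 - ((n:ℝ)*((n:ℝ)-1)+((k:ℝ)-1))*μ^2
      + ((n:ℝ)-1)*((n:ℝ)-(k:ℝ)+1)*((k:ℝ)-1) = 0)
    (hne : μ*(μ^2 - ((k:ℝ)-1)) ≠ 0) :
    Module.End.HasEigenvalue (Matrix.toLin' (@SimpleGraph.adjMatrix ℝ (Fin (2*n))
      (bipG n (k-1) 1) (Classical.decRel _) _ _)) μ := by
  obtain ⟨c1, c2, c3, c4⟩ := casts n k hk hn
  apply Module.End.hasEigenvalue_of_hasEigenvector (x := vecB n k μ)
  constructor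
  · rw [Module.End.mem_eigenspace_iff]
    funext u
    rw [key n k hk hn]
    simp only [Pi.smul_apply, smul_eq_mul]
    have hY1 : ∀ x : Fin (2*n), n ≤ x.val → x.val < 2*n-1 →
        vecB n k μ x = μ*(μ^2-((k:ℝ)-1)) := by
      intro x hx1 hx2
      simp only [vecB]
      rw [if_neg (by omega), if_neg (by omega), if_pos hx2]
    have hY2 : ∀ x : Fin (2*n), 2*n-1 ≤ x.val → x.val < 2*n →
        vecB n k μ x = ((k:ℝ)-1)*((n:ℝ)-1)*μ := by
      intro x hx1 hx2
      simp only [vecB]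
      rw [if_neg (by omega), if_neg (by omega), if_neg (by omega)]
    have hX1 : ∀ x : Fin (2*n), 0 ≤ x.val → x.val < k-1 →
        vecB n k μ x = ((n:ℝ)-1)*μ^2 := by
      intro x _ hx2
      simp only [vecB]
      rw [if_pos hx2]
    have hX2 : ∀ x : Fin (2*n), k-1 ≤ x.val → x.val < n →
        vecB n k μ x = ((n:ℝ)-1)*(μ^2-((k:ℝ)-1)) := by
      intro x hx1 hx2
      simp only [vecB]
      rw [if_neg (by omega), if_pos hx2]
    rw [sum_ite_const n (2*n-1) (by omega) _ _ hY1]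
    by_cases h1 : u.val < k-1
    · rw [if_pos h1, sum_ite_const (2*n-1) (2*n) (by omega) _ _ hY2, c1, c2]
      have hvu : vecB n k μ u = ((n:ℝ)-1)*μ^2 := hX1 u (by omega) h1
      rw [hvu]; ring
    · rw [if_neg h1]
      by_cases h2 : u.val < n
      · rw [if_pos h2, c1]
        have hvu : vecB n k μ u = ((n:ℝ)-1)*(μ^2-((k:ℝ)-1)) := hX2 u (by omega) h2
        rw [hvu]; ring
      · rw [if_neg h2]
        rw [sum_ite_const 0 (k-1) (by omega) _ _ hX1, c3]
        by_cases h3 : u.val < 2*n-1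
        · rw [if_pos h3, sum_ite_const (k-1) n (by omega) _ _ hX2, c4]
          have hvu : vecB n k μ u = μ*(μ^2-((k:ℝ)-1)) := hY1 u (by omega) h3
          rw [hvu]
          linear_combination -hroot
        · rw [if_neg h3]
          have hvu : vecB n k μ u = ((k:ℝ)-1)*((n:ℝ)-1)*μ := hY2 u (by omega) u.isLt
          rw [hvu]; ring
  · intro h0
    have h1 : vecB n k μ ⟨n, by omega⟩ = 0 := by rw [h0]; rfl
    have h2 : vecB n k μ ⟨n, by omega⟩ = μ*(μ^2-((k:ℝ)-1)) := by
      have hv : ((⟨n, by omega⟩ : Fin (2*n)) : ℕ) = n := rfl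
      simp only [vecB, hv]
      rw [if_neg (by omega), if_neg (by omega), if_pos (by omega)]
    exact hne (h2 ▸ h1)

lemma eigen_quartic (n k : ℕ) (hk : 2 ≤ k) (hn : 2*k ≤ n) (lam : ℝ)
    (hl : Module.End.HasEigenvalue (Matrix.toLin' (@SimpleGraph.adjMatrix ℝ (Fin (2*n))
      (bipG n (k-1) 1) (Classical.decRel _) _ _)) lam) :
    lam = 0 ∨ lam^4 - ((n:ℝ)*((n:ℝ)-1)+((k:ℝ)-1))*lam^2
      + ((n:ℝ)-1)*((n:ℝ)-(k:ℝ)+1)*((k:ℝ)-1) = 0 := by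
  by_cases hl0 : lam = 0
  · exact Or.inl hl0
  right
  obtain ⟨c1, c2, c3, c4⟩ := casts n k hk hn
  obtain ⟨v, hv1, hv2⟩ := hl.exists_hasEigenvector
  rw [Module.End.mem_eigenspace_iff] at hv1
  set T1 : ℝ := ∑ x : Fin (2*n), (if n ≤ x.val ∧ x.val < 2*n-1 then v x else 0) with hT1
  set T2 : ℝ := ∑ x : Fin (2*n), (if 2*n-1 ≤ x.val ∧ x.val < 2*n then v x else 0) with hT2
  set T3 : ℝ := ∑ x : Fin (2*n), (if 0 ≤ x.val ∧ x.val < k-1 then v x else 0) with hT3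
  set T4 : ℝ := ∑ x : Fin (2*n), (if k-1 ≤ x.val ∧ x.val < n then v x else 0) with hT4
  set a : ℝ := (T1 + T2)/lam with ha
  set b : ℝ := T1/lam with hb
  set c : ℝ := (T3 + T4)/lam with hc
  set d : ℝ := T3/lam with hd
  have hva : ∀ u : Fin (2*n), v u =
      if u.val < k-1 then a else if u.val < n then b
      else if u.val < 2*n-1 then c else d := by
    intro u
    have h := congrFun hv1 u
    rw [key n k hk hn v u] at h
    simp only [Pi.smul_apply, smul_eq_mul] at h
    split_ifs at h ⊢ with h1 h2 h3
    · rw [ha, eq_div_iff hl0]; linarith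
    · rw [hb, eq_div_iff hl0]; linarith
    · rw [hc, eq_div_iff hl0]; linarith
    · rw [hd, eq_div_iff hl0]; linarith
  -- evaluate the sums
  have hvY1 : ∀ x : Fin (2*n), n ≤ x.val → x.val < 2*n-1 → v x = c := by
    intro x h1 h2; rw [hva x, if_neg (by omega), if_neg (by omega), if_pos h2]
  have hvY2 : ∀ x : Fin (2*n), 2*n-1 ≤ x.val → x.val < 2*n → v x = d := by
    intro x h1 h2; rw [hva x, if_neg (by omega), if_neg (by omega), if_neg (by omega)]
  have hvX1 : ∀ x : Fin (2*n), 0 ≤ x.val → x.val < k-1 → v x = a := by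
    intro x h1 h2; rw [hva x, if_pos h2]
  have hvX2 : ∀ x : Fin (2*n), k-1 ≤ x.val → x.val < n → v x = b := by
    intro x h1 h2; rw [hva x, if_neg (by omega), if_pos h2]
  have eT1 : T1 = ((n:ℝ)-1)*c := by
    rw [hT1, sum_ite_const n (2*n-1) (by omega) _ _ hvY1, c1]
  have eT2 : T2 = d := by
    rw [hT2, sum_ite_const (2*n-1) (2*n) (by omega) _ _ hvY2, c2, one_mul]
  have eT3 : T3 = ((k:ℝ)-1)*a := by
    rw [hT3, sum_ite_const 0 (k-1) (by omega) _ _ hvX1, c3]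
  have eT4 : T4 = ((n:ℝ)-(k:ℝ)+1)*b := by
    rw [hT4, sum_ite_const (k-1) n (by omega) _ _ hvX2, c4]
  have e1 : lam * a = ((n:ℝ)-1)*c + d := by
    rw [ha, mul_div_cancel₀ _ hl0, ← eT1, ← eT2]
  have e2 : lam * b = ((n:ℝ)-1)*c := by
    rw [hb, mul_div_cancel₀ _ hl0, eT1]
  have e3 : lam * c = ((k:ℝ)-1)*a + ((n:ℝ)-(k:ℝ)+1)*b := by
    rw [hc, mul_div_cancel₀ _ hl0, ← eT3, ← eT4]
  have e4 : lam * d = ((k:ℝ)-1)*a := by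
    rw [hd, mul_div_cancel₀ _ hl0, eT3]
  have h5 : lam^2*b = (lam^2 - ((k:ℝ)-1))*a := by
    linear_combination (-lam)*e1 + lam*e2 - e4
  have h6 : lam^2*b = ((n:ℝ)-1)*((k:ℝ)-1)*a + ((n:ℝ)-1)*((n:ℝ)-(k:ℝ)+1)*b := by
    linear_combination lam*e2 + ((n:ℝ)-1)*e3
  have hn1 : (1:ℝ) ≤ (k:ℝ)-1 := by
    have : (2:ℝ) ≤ (k:ℝ) := by exact_mod_cast hk
    linarith
  have hn2 : (3:ℝ) ≤ (n:ℝ)-1 := by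
    have : (4:ℕ) ≤ n := by omega
    have : (4:ℝ) ≤ (n:ℝ) := by exact_mod_cast this
    linarith
  by_cases hb0 : b = 0
  · exfalso
    have ha0 : a = 0 := by
      have h := h6
      rw [hb0] at h
      have h' : ((n:ℝ)-1)*((k:ℝ)-1)*a = 0 := by linarith
      have := mul_eq_zero.mp h'
      rcases this with h'' | h''
      · rcases mul_eq_zero.mp h'' with h3 | h3 <;> linarith
      · exact h''
    have hc0 : c = 0 := by
      have := e2; rw [hb0] at this
      have h' : ((n:ℝ)-1)*c = 0 := by linarith
      rcases mul_eq_zero.mp h' with h'' | h''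
      · linarith
      · exact h''
    have hd0 : d = 0 := by
      have := e4; rw [ha0] at this
      have h' : lam * d = 0 := by linarith
      rcases mul_eq_zero.mp h' with h'' | h''
      · exact absurd h'' hl0
      · exact h''
    obtain ⟨u, hu⟩ := Function.ne_iff.mp hv2
    apply hu
    rw [hva u, ha0, hb0, hc0, hd0]
    split_ifs <;> rfl
  · have key2 : (lam^4 - ((n:ℝ)*((n:ℝ)-1)+((k:ℝ)-1))*lam^2
        + ((n:ℝ)-1)*((n:ℝ)-(k:ℝ)+1)*((k:ℝ)-1)) * b = 0 := by
      linear_combination (-(((n:ℝ)-1)*((k:ℝ)-1)))*h5 + (lam^2-((k:ℝ)-1))*h6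
    exact (mul_eq_zero.mp key2).resolve_right hb0

lemma root_le (S P x : ℝ) (hD : 0 ≤ S^2 - 4*P) (hx : x^4 - S*x^2 + P = 0) :
    x ≤ Real.sqrt ((S + Real.sqrt (S^2-4*P))/2) := by
  have hr : Real.sqrt (S^2-4*P) ^ 2 = S^2-4*P := Real.sq_sqrt hD
  have hr0 : 0 ≤ Real.sqrt (S^2-4*P) := Real.sqrt_nonneg _
  have hfac : (x^2 - (S + Real.sqrt (S^2-4*P))/2) * (x^2 - (S - Real.sqrt (S^2-4*P))/2) = 0 := by
    linear_combination hx - (1/4)*hr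
  have hx2 : x^2 ≤ (S + Real.sqrt (S^2-4*P))/2 := by
    rcases mul_eq_zero.mp hfac with h | h
    · have : x^2 = (S + Real.sqrt (S^2-4*P))/2 := by linarith
      linarith
    · have : x^2 = (S - Real.sqrt (S^2-4*P))/2 := by linarith
      linarith
  calc x ≤ |x| := le_abs_self x
    _ = Real.sqrt (x^2) := (Real.sqrt_sq_eq_abs x).symm
    _ ≤ _ := Real.sqrt_le_sqrt hx2

lemma mu_root (S P : ℝ) (hD : 0 ≤ S^2 - 4*P) (hS : 0 ≤ S) :
    (Real.sqrt ((S + Real.sqrt (S^2-4*P))/2))^4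
      - S*(Real.sqrt ((S + Real.sqrt (S^2-4*P))/2))^2 + P = 0 := by
  have hr : Real.sqrt (S^2-4*P) ^ 2 = S^2-4*P := Real.sq_sqrt hD
  have hr0 : 0 ≤ Real.sqrt (S^2-4*P) := Real.sqrt_nonneg _
  have ht : 0 ≤ (S + Real.sqrt (S^2-4*P))/2 := by linarith
  have hm : (Real.sqrt ((S + Real.sqrt (S^2-4*P))/2))^2 = (S + Real.sqrt (S^2-4*P))/2 :=
    Real.sq_sqrt ht
  linear_combination ((Real.sqrt ((S + Real.sqrt (S^2-4*P))/2))^2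
    + (S + Real.sqrt (S^2-4*P))/2 - S) * hm + (1/4)*hr


/-- ρ(B_{n,k}) is the largest root of
x⁴ − (n(n−1)+(k−1))x² + (n−1)(n−k+1)(k−1). -/
theorem stmt0 (n k : ℕ) (hk : 2 ≤ k) (hn : 2*k ≤ n) :
    (specRad (bipG n (k-1) 1))^4
        - ((n:ℝ)*((n:ℝ)-1) + ((k:ℝ)-1)) * (specRad (bipG n (k-1) 1))^2
        + ((n:ℝ)-1)*((n:ℝ)-(k:ℝ)+1)*((k:ℝ)-1) = 0 ∧
      ∀ x : ℝ, x^4 - ((n:ℝ)*((n:ℝ)-1) + ((k:ℝ)-1)) * x^2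
        + ((n:ℝ)-1)*((n:ℝ)-(k:ℝ)+1)*((k:ℝ)-1) = 0 →
        x ≤ specRad (bipG n (k-1) 1) := by
  set S : ℝ := (n:ℝ)*((n:ℝ)-1) + ((k:ℝ)-1) with hSdef
  set P : ℝ := ((n:ℝ)-1)*((n:ℝ)-(k:ℝ)+1)*((k:ℝ)-1) with hPdef
  have hNK : (2:ℝ)*(k:ℝ) ≤ (n:ℝ) := by exact_mod_cast hn
  have hK : (2:ℝ) ≤ (k:ℝ) := by exact_mod_cast hk
  have hD : 0 ≤ S^2 - 4*P := by
    rw [hSdef, hPdef]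
    nlinarith [sq_nonneg (((n:ℝ)-1)*((n:ℝ)-(k:ℝ)+1) - (n:ℝ)*((k:ℝ)-1)),
      mul_nonneg (mul_nonneg (mul_nonneg (by linarith : (0:ℝ) ≤ (n:ℝ)-1)
        (by linarith : (0:ℝ) ≤ (n:ℝ)-(k:ℝ)+1)) (by linarith : (0:ℝ) ≤ (k:ℝ)-1))
        (by linarith : (0:ℝ) ≤ (n:ℝ)-1)]
  have hS : 0 ≤ S := by rw [hSdef]; nlinarith
  set μ : ℝ := Real.sqrt ((S + Real.sqrt (S^2-4*P))/2) with hμdef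
  have hr0 : 0 ≤ Real.sqrt (S^2-4*P) := Real.sqrt_nonneg _
  have ht : 0 ≤ (S + Real.sqrt (S^2-4*P))/2 := by linarith
  have hμ2 : μ^2 = (S + Real.sqrt (S^2-4*P))/2 := Real.sq_sqrt ht
  have hμroot : μ^4 - S*μ^2 + P = 0 := mu_root S P hD hS
  -- μ^2 > k-1
  have hgt : ((k:ℝ)-1) < μ^2 := by
    rw [hμ2, hSdef]
    nlinarith [sq_nonneg ((n:ℝ)-1)]
  have hμpos : 0 < μ := by
    rw [hμdef]
    apply Real.sqrt_pos.mpr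
    rw [hSdef]
    nlinarith
  have hne : μ*(μ^2 - ((k:ℝ)-1)) ≠ 0 :=
    ne_of_gt (mul_pos hμpos (by linarith))
  have hmem : Module.End.HasEigenvalue (Matrix.toLin' (@SimpleGraph.adjMatrix ℝ (Fin (2*n))
      (bipG n (k-1) 1) (Classical.decRel _) _ _)) μ :=
    hasEigen n k hk hn μ (by rw [← hSdef, ← hPdef]; exact hμroot) hne
  have hbdd : ∀ x : ℝ, Module.End.HasEigenvalue (Matrix.toLin'
      (@SimpleGraph.adjMatrix ℝ (Fin (2*n)) (bipG n (k-1) 1) (Classical.decRel _) _ _)) x →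
      x ≤ μ := by
    intro x hx
    rcases eigen_quartic n k hk hn x hx with h | h
    · rw [h]; exact le_of_lt hμpos
    · exact root_le S P x hD (by rw [hSdef, hPdef]; exact h)
  have hspec : specRad (bipG n (k-1) 1) = μ := by
    unfold specRad
    apply le_antisymm
    · exact csSup_le ⟨μ, hmem⟩ (fun x hx => hbdd x hx)
    · exact le_csSup ⟨μ, fun x hx => hbdd x hx⟩ hmem
  rw [hspec]
  constructor
  · exact hμroot
  · intro x hx
    exact root_le S P x hD hx
end

section
/- Let k ≥ 2, n ≥ 2k, and k+1 ≤ p ≤ n−1 be integers. Then the spectral radius of K_{p-1, n+k-p+1} ⊔ \widehat{K_{n-p+1, p-k+1}} is strictly less than the spectral radius of K_{k-1, n-1} ⊔ \widehat{K_{n-k+1, 1}}. -/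
open SimpleGraph

lemma eig_le {N : ℕ} (A : Matrix (Fin N) (Fin N) ℝ) (hA : ∀ i j, 0 ≤ A i j)
    (v : Fin N → ℝ) (hv : ∀ i, 0 < v i) (μ : ℝ)
    (h : ∀ i, A.mulVec v i ≤ μ * v i) {lam : ℝ}
    (hl : Module.End.HasEigenvalue (Matrix.toLin' A) lam) : lam ≤ μ := by
  obtain ⟨u, hu⟩ := hl.exists_hasEigenvector
  have hmv : A.mulVec u = lam • u := by
    have := hu.apply_eq_smul
    simpa [Matrix.toLin'_apply] using this
  have hune : u ≠ 0 := hu.right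
  have hne : (Finset.univ : Finset (Fin N)).Nonempty := by
    by_contra hc
    apply hune
    funext i
    exact absurd ⟨i, Finset.mem_univ i⟩ hc
  obtain ⟨i, -, hi⟩ := Finset.exists_max_image Finset.univ (fun j => |u j| / v j) hne
  have hj : ∃ j, u j ≠ 0 := by
    by_contra hc
    push_neg at hc
    exact hune (funext hc)
  obtain ⟨j, hj⟩ := hj
  have hij : |u j| / v j ≤ |u i| / v i := hi j (Finset.mem_univ j)
  have hujp : 0 < |u j| / v j := div_pos (abs_pos.mpr hj) (hv j)
  have hui : 0 < |u i| := by
    have h2 : 0 < |u i| / v i := lt_of_lt_of_le hujp hij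
    have h3 := mul_pos h2 (hv i)
    rwa [div_mul_cancel₀ _ (hv i).ne'] at h3
  have hcv : ∀ l, |u l| * v i ≤ |u i| * v l := fun l => by
    have := hi l (Finset.mem_univ l)
    rw [div_le_div_iff₀ (hv l) (hv i)] at this
    exact this
  -- main estimate at index i
  have hAu : A.mulVec u i = lam * u i := by rw [hmv]; rfl
  have habs : |lam * u i| ≤ ∑ l, A i l * |u l| := by
    rw [← hAu]
    calc |A.mulVec u i| = |∑ l, A i l * u l| := by rfl
    _ ≤ ∑ l, |A i l * u l| := Finset.abs_sum_le_sum_abs _ _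
    _ = ∑ l, A i l * |u l| := by
        refine Finset.sum_congr rfl fun l _ => ?_
        rw [abs_mul, abs_of_nonneg (hA i l)]
  have hs : (∑ l, A i l * |u l|) * v i ≤ (∑ l, A i l * v l) * |u i| := by
    rw [Finset.sum_mul, Finset.sum_mul]
    refine Finset.sum_le_sum fun l _ => ?_
    have := hcv l
    nlinarith [hA i l]
  have hAv : (∑ l, A i l * v l) = A.mulVec v i := rfl
  have hfin : |lam| * |u i| * v i ≤ μ * v i * |u i| := by
    rw [← abs_mul]
    calc |lam * u i| * v i ≤ (∑ l, A i l * |u l|) * v i := by nlinarith [hv i]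
    _ ≤ (∑ l, A i l * v l) * |u i| := hs
    _ = A.mulVec v i * |u i| := by rw [hAv]
    _ ≤ μ * v i * |u i| := by nlinarith [h i, hui]
  have : |lam| ≤ μ := by
    nlinarith [mul_pos hui (hv i)]
  calc lam ≤ |lam| := le_abs_self lam
  _ ≤ μ := this

lemma hasEig {N : ℕ} (A : Matrix (Fin N) (Fin N) ℝ) (u : Fin N → ℝ) (hu : u ≠ 0) (μ : ℝ)
    (h : A.mulVec u = μ • u) : Module.End.HasEigenvalue (Matrix.toLin' A) μ := by
  refine Module.End.hasEigenvalue_of_hasEigenvector (x := u) ⟨?_, hu⟩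
  rw [Module.End.mem_eigenspace_iff, Matrix.toLin'_apply, h]
lemma sum_ind (m c d : ℕ) (hd : d ≤ m) (r : ℝ) :
    ∑ t ∈ Finset.range m, (if c ≤ t ∧ t < d then r else 0) = ((d - c : ℕ) : ℝ) * r := by
  rw [Finset.sum_ite, Finset.sum_const, Finset.sum_const_zero, add_zero]
  have : (Finset.range m).filter (fun t => c ≤ t ∧ t < d) = Finset.Ico c d := by
    ext t
    simp only [Finset.mem_filter, Finset.mem_range, Finset.mem_Ico]
    omega
  rw [this, Nat.card_Ico, nsmul_eq_mul]

lemma mulVec_bipG (n a b : ℕ) (han : a ≤ n) (hbn : b ≤ n) (v1 v2 w1 w2 : ℝ) (i : Fin (2*n)) :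
    ((@SimpleGraph.adjMatrix ℝ (Fin (2*n)) (bipG n a b) (Classical.decRel _) _ _).mulVec
      (fun j => if j.val < a then v1 else if j.val < n then v2
        else if j.val < 2*n - b then w1 else w2)) i =
    if i.val < a then ((n - b : ℕ) : ℝ) * w1 + (b : ℝ) * w2
    else if i.val < n then ((n - b : ℕ) : ℝ) * w1
    else if i.val < 2*n - b then (a : ℝ) * v1 + ((n - a : ℕ) : ℝ) * v2
    else (a : ℝ) * v1 := by
  classical
  have hstep : ((@SimpleGraph.adjMatrix ℝ (Fin (2*n)) (bipG n a b) (Classical.decRel _) _ _).mulVec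
      (fun j => if j.val < a then v1 else if j.val < n then v2
        else if j.val < 2*n - b then w1 else w2)) i =
      ∑ t ∈ Finset.range (2*n),
        (fun t => (if ((i.val < n ∧ n ≤ t ∧ (i.val < a ∨ t < 2*n - b)) ∨
             (t < n ∧ n ≤ i.val ∧ (t < a ∨ i.val < 2*n - b))) then (1:ℝ) else 0) *
          (if t < a then v1 else if t < n then v2 else if t < 2*n - b then w1 else w2)) t := by
    rw [← Fin.sum_univ_eq_sum_range]
    simp only [Matrix.mulVec, dotProduct, SimpleGraph.adjMatrix_apply]
    refine Finset.sum_congr rfl fun j _ => ?_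
    by_cases h : (bipG n a b).Adj i j
    · have h' : ((i.val < n ∧ n ≤ j.val ∧ (i.val < a ∨ j.val < 2*n - b)) ∨
        (j.val < n ∧ n ≤ i.val ∧ (j.val < a ∨ i.val < 2*n - b))) := h
      rw [if_pos h, if_pos h']
    · have h' : ¬((i.val < n ∧ n ≤ j.val ∧ (i.val < a ∨ j.val < 2*n - b)) ∨
        (j.val < n ∧ n ≤ i.val ∧ (j.val < a ∨ i.val < 2*n - b))) := h
      rw [if_neg h, if_neg h']
  rw [hstep]
  rcases lt_or_ge i.val a with hia | hia
  · have hin : i.val < n := lt_of_lt_of_le hia han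
    rw [if_pos hia]
    have hpt : ∀ t ∈ Finset.range (2*n),
        (fun t => (if ((i.val < n ∧ n ≤ t ∧ (i.val < a ∨ t < 2*n - b)) ∨
             (t < n ∧ n ≤ i.val ∧ (t < a ∨ i.val < 2*n - b))) then (1:ℝ) else 0) *
          (if t < a then v1 else if t < n then v2 else if t < 2*n - b then w1 else w2)) t =
        (if n ≤ t ∧ t < 2*n - b then w1 else 0) + (if 2*n - b ≤ t ∧ t < 2*n then w2 else 0) := by
      intro t ht
      rw [Finset.mem_range] at ht
      simp only
      split_ifs <;> first | ring1 | (exfalso; omega)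
    rw [Finset.sum_congr rfl hpt, Finset.sum_add_distrib, sum_ind _ _ _ (by omega),
      sum_ind _ _ _ (by omega)]
    congr 2 <;> (norm_cast; omega)
  rcases lt_or_ge i.val n with hin | hin
  · rw [if_neg (by omega), if_pos hin]
    have hpt : ∀ t ∈ Finset.range (2*n),
        (fun t => (if ((i.val < n ∧ n ≤ t ∧ (i.val < a ∨ t < 2*n - b)) ∨
             (t < n ∧ n ≤ i.val ∧ (t < a ∨ i.val < 2*n - b))) then (1:ℝ) else 0) *
          (if t < a then v1 else if t < n then v2 else if t < 2*n - b then w1 else w2)) t =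
        (if n ≤ t ∧ t < 2*n - b then w1 else 0) := by
      intro t ht
      rw [Finset.mem_range] at ht
      simp only
      split_ifs <;> first | ring1 | (exfalso; omega)
    rw [Finset.sum_congr rfl hpt, sum_ind _ _ _ (by omega)]
    norm_num
    omega
  rcases lt_or_ge i.val (2*n - b) with hib | hib
  · rw [if_neg (by omega), if_neg (by omega), if_pos hib]
    have hpt : ∀ t ∈ Finset.range (2*n),
        (fun t => (if ((i.val < n ∧ n ≤ t ∧ (i.val < a ∨ t < 2*n - b)) ∨
             (t < n ∧ n ≤ i.val ∧ (t < a ∨ i.val < 2*n - b))) then (1:ℝ) else 0) *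
          (if t < a then v1 else if t < n then v2 else if t < 2*n - b then w1 else w2)) t =
        (if 0 ≤ t ∧ t < a then v1 else 0) + (if a ≤ t ∧ t < n then v2 else 0) := by
      intro t ht
      rw [Finset.mem_range] at ht
      simp only
      split_ifs <;> first | ring1 | (exfalso; omega)
    rw [Finset.sum_congr rfl hpt, Finset.sum_add_distrib, sum_ind _ _ _ (by omega),
      sum_ind _ _ _ (by omega)]
    congr 2 <;> (norm_cast; omega)
  · rw [if_neg (by omega), if_neg (by omega), if_neg (by omega)]
    have hpt : ∀ t ∈ Finset.range (2*n),
        (fun t => (if ((i.val < n ∧ n ≤ t ∧ (i.val < a ∨ t < 2*n - b)) ∨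
             (t < n ∧ n ≤ i.val ∧ (t < a ∨ i.val < 2*n - b))) then (1:ℝ) else 0) *
          (if t < a then v1 else if t < n then v2 else if t < 2*n - b then w1 else w2)) t =
        (if 0 ≤ t ∧ t < a then v1 else 0) := by
      intro t ht
      rw [Finset.mem_range] at ht
      simp only
      split_ifs <;> first | ring1 | (exfalso; omega)
    rw [Finset.sum_congr rfl hpt, sum_ind _ _ _ (by omega)]
    norm_num
lemma specRad_bipG (n a b : ℕ) (ha : 1 ≤ a) (han : a + 1 ≤ n) (hb : 1 ≤ b)
    (hbn : b + 1 ≤ n) :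
    specRad (bipG n a b) =
      Real.sqrt ((((a:ℝ)*n + ((n:ℝ)-a)*((n:ℝ)-b)) +
        Real.sqrt (((a:ℝ)*n + ((n:ℝ)-a)*((n:ℝ)-b))^2
          - 4*((a:ℝ)*b*((n:ℝ)-a)*((n:ℝ)-b))))/2) := by
  have hA : (1:ℝ) ≤ (a:ℝ) := by exact_mod_cast ha
  have hB : (1:ℝ) ≤ (b:ℝ) := by exact_mod_cast hb
  have hAn : (a:ℝ) + 1 ≤ (n:ℝ) := by exact_mod_cast han
  have hBn : (b:ℝ) + 1 ≤ (n:ℝ) := by exact_mod_cast hbn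
  set T : ℝ := (a:ℝ)*n + ((n:ℝ)-a)*((n:ℝ)-b) with hT
  set D : ℝ := (a:ℝ)*b*((n:ℝ)-a)*((n:ℝ)-b) with hD
  have hE : 0 ≤ T^2 - 4*D := by
    rw [hT, hD]
    nlinarith [sq_nonneg ((a:ℝ)*n - ((n:ℝ)-a)*((n:ℝ)-b)),
      mul_nonneg (mul_nonneg (by linarith : (0:ℝ) ≤ (a:ℝ)) (by linarith : (0:ℝ) ≤ (n:ℝ)-(a:ℝ)))
        (by linarith : (0:ℝ) ≤ (n:ℝ)-(b:ℝ))]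
  set r : ℝ := Real.sqrt (T^2 - 4*D) with hrdef
  have hr2 : r^2 = T^2 - 4*D := Real.sq_sqrt hE
  have hr0 : 0 ≤ r := Real.sqrt_nonneg _
  set x : ℝ := (T + r)/2 with hxdef
  have hx2 : x^2 = T*x - D := by rw [hxdef]; linear_combination hr2/4
  have hfab : T*((a:ℝ)*b) - ((a:ℝ)*b)^2 - D = (a:ℝ)^2*b*((n:ℝ)-b) := by rw [hT, hD]; ring
  have habpos : (0:ℝ) < (a:ℝ)*b := by nlinarith
  have hfabpos : (0:ℝ) < T*((a:ℝ)*b) - ((a:ℝ)*b)^2 - D := by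
    rw [hfab]; nlinarith
  have hxab : (a:ℝ)*b < x := by
    have hrgt : 2*((a:ℝ)*b) - T < r := by nlinarith [hr2, hr0]
    rw [hxdef]; linarith
  have hx0 : 0 < x := lt_trans habpos hxab
  set lam : ℝ := Real.sqrt x with hlamdef
  have hlam2 : lam^2 = x := Real.sq_sqrt hx0.le
  have hlam0 : 0 < lam := Real.sqrt_pos.mpr hx0
  have hquart : lam^4 = T*lam^2 - D := by
    calc lam^4 = (lam^2)^2 := by ring
    _ = x^2 := by rw [hlam2]
    _ = T*x - D := hx2
    _ = T*lam^2 - D := by rw [hlam2]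
  set V1 : ℝ := lam^2*((n:ℝ)-b) with hV1
  set V2 : ℝ := ((n:ℝ)-b)*(lam^2 - (a:ℝ)*b) with hV2
  set W1 : ℝ := lam*(lam^2 - (a:ℝ)*b) with hW1
  set W2 : ℝ := (a:ℝ)*lam*((n:ℝ)-b) with hW2
  have hgap : (0:ℝ) < lam^2 - (a:ℝ)*b := by rw [hlam2]; linarith
  have hnb : (0:ℝ) < (n:ℝ)-(b:ℝ) := by linarith
  have hV1p : 0 < V1 := by rw [hV1]; positivity
  have hV2p : 0 < V2 := by rw [hV2]; positivity
  have hW1p : 0 < W1 := by rw [hW1]; positivity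
  have hW2p : 0 < W2 := by rw [hW2]; positivity
  set u : Fin (2*n) → ℝ := fun j => if j.val < a then V1 else if j.val < n then V2
    else if j.val < 2*n - b then W1 else W2 with hu
  have hup : ∀ j, 0 < u j := by
    intro j; rw [hu]; simp only; split_ifs <;> assumption
  have hune : u ≠ 0 := by
    intro hc
    have h0 := hup ⟨0, by omega⟩
    rw [hc] at h0
    simp at h0
  have hcastb : ((n - b : ℕ) : ℝ) = (n:ℝ) - (b:ℝ) := by
    rw [Nat.cast_sub (by omega)]
  have hcasta : ((n - a : ℕ) : ℝ) = (n:ℝ) - (a:ℝ) := by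
    rw [Nat.cast_sub (by omega)]
  have heig : (@SimpleGraph.adjMatrix ℝ (Fin (2*n)) (bipG n a b)
      (Classical.decRel _) _ _).mulVec u = lam • u := by
    funext i
    rw [hu]
    rw [mulVec_bipG n a b (by omega) (by omega) V1 V2 W1 W2 i]
    simp only [Pi.smul_apply, smul_eq_mul]
    rw [hcastb, hcasta]
    split_ifs
    · rw [hV1, hW1, hW2]; ring
    · rw [hV2, hW1]; ring
    · rw [hV1, hV2, hW1]; linear_combination (-1 : ℝ) * hquart
    · rw [hV1, hW2]; ring
  have hnn : ∀ i j, 0 ≤ (@SimpleGraph.adjMatrix ℝ (Fin (2*n)) (bipG n a b)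
      (Classical.decRel _) _ _) i j := by
    intro i j
    rw [SimpleGraph.adjMatrix_apply]
    split_ifs <;> norm_num
  have hle : ∀ i, (@SimpleGraph.adjMatrix ℝ (Fin (2*n)) (bipG n a b)
      (Classical.decRel _) _ _).mulVec u i ≤ lam * u i := by
    intro i
    rw [heig]
    simp
  have hmem : Module.End.HasEigenvalue (Matrix.toLin'
      (@SimpleGraph.adjMatrix ℝ (Fin (2*n)) (bipG n a b) (Classical.decRel _) _ _)) lam :=
    hasEig _ u hune lam heig
  have : specRad (bipG n a b) = lam := by
    apply le_antisymm
    · apply Real.sSup_le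
      · intro y hy
        exact eig_le _ hnn u hup lam hle hy
      · exact Real.sqrt_nonneg _
    · exact le_csSup ⟨lam, fun y hy => eig_le _ hnn u hup lam hle hy⟩ hmem
  rw [this]
lemma poly_pos (K S Q : ℝ) (hK : 0 ≤ K) (hS : 0 ≤ S) (hQ : 0 ≤ Q) :
    (0:ℝ) < 242 + 500*Q + 359*Q^2 + 118*Q^3 + 18*Q^4 + 1*Q^5 + 500*S + 973*S*Q + 632*S*Q^2 + 181*S*Q^3 + 23*S*Q^4 + 1*S*Q^5 + 359*S^2 + 632*S^2*Q + 339*S^2*Q^2 + 71*S^2*Q^3 + 5*S^2*Q^4 + 118*S^3 + 181*S^3*Q + 71*S^3*Q^2 + 8*S^3*Q^3 + 18*S^4 + 23*S^4*Q + 5*S^4*Q^2 + 1*S^5 + 1*S^5*Q + 292*K + 521*K*Q + 288*K*Q^2 + 64*K*Q^3 + 5*K*Q^4 + 521*K*S + 876*K*S*Q + 431*K*S*Q^2 + 81*K*S*Q^3 + 5*K*S*Q^4 + 288*K*S^2 + 431*K*S^2*Q + 160*K*S^2*Q^2 + 17*K*S^2*Q^3 + 64*K*S^3 + 81*K*S^3*Q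 + 17*K*S^3*Q^2 + 5*K*S^4 + 5*K*S^4*Q + 136*K^2 + 206*K^2*Q + 79*K^2*Q^2 + 9*K^2*Q^3 + 206*K^2*S + 295*K^2*S*Q + 98*K^2*S*Q^2 + 9*K^2*S*Q^3 + 79*K^2*S^2 + 98*K^2*S^2*Q + 19*K^2*S^2*Q^2 + 9*K^2*S^3 + 9*K^2*S^3*Q + 28*K^3 + 35*K^3*Q + 7*K^3*Q^2 + 35*K^3*S + 42*K^3*S*Q + 7*K^3*S*Q^2 + 7*K^3*S^2 + 7*K^3*S^2*Q + 2*K^4 + 2*K^4*Q + 2*K^4*S + 2*K^4*S*Q := by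
  obtain ⟨K', rfl⟩ : ∃ K', K = K'^2 := ⟨Real.sqrt K, (Real.sq_sqrt hK).symm⟩
  obtain ⟨S', rfl⟩ : ∃ S', S = S'^2 := ⟨Real.sqrt S, (Real.sq_sqrt hS).symm⟩
  obtain ⟨Q', rfl⟩ : ∃ Q', Q = Q'^2 := ⟨Real.sqrt Q, (Real.sq_sqrt hQ).symm⟩
  positivity

lemma step2 (TB DB TG DG : ℝ) (hTB0 : 0 < TB) (hTG0 : 0 ≤ TG) (hDB0 : 0 < DB)
    (hEB : 0 ≤ TB^2 - 4*DB) (hEG : 0 ≤ TG^2 - 4*DG) (hdT1 : 1 ≤ TB - TG)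
    (hval : 0 < (TB - TG)*(TB^2 - 2*DB) + (DG - DB)*TB) :
    Real.sqrt ((TG + Real.sqrt (TG^2 - 4*DG))/2) <
      Real.sqrt ((TB + Real.sqrt (TB^2 - 4*DB))/2) := by
  set rB : ℝ := Real.sqrt (TB^2 - 4*DB) with hrB
  set rG : ℝ := Real.sqrt (TG^2 - 4*DG) with hrG
  have hrB2 : rB^2 = TB^2 - 4*DB := Real.sq_sqrt hEB
  have hrG2 : rG^2 = TG^2 - 4*DG := Real.sq_sqrt hEG
  have hrB0 : 0 ≤ rB := Real.sqrt_nonneg _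
  have hrG0 : 0 ≤ rG := Real.sqrt_nonneg _
  have hrBle : rB ≤ TB := by nlinarith [hrB2, hrB0, hDB0, hTB0]
  have hxB2 : ((TB + rB)/2)^2 = TB*((TB + rB)/2) - DB := by linear_combination hrB2/4
  have hTBxB : TB^2 - 2*DB ≤ TB*((TB + rB)/2) := by
    have h5 : 0 ≤ rB * (TB - rB) := mul_nonneg hrB0 (by linarith)
    nlinarith [h5, hrB2]
  have hf : 0 < ((TB + rB)/2)^2 - TG*((TB + rB)/2) + DG := by
    have h1 : ((TB + rB)/2)^2 - TG*((TB + rB)/2) + DG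
        = (TB-TG)*((TB + rB)/2) + (DG - DB) := by linear_combination hxB2
    have h2 : (TB-TG)*(TB^2-2*DB) ≤ (TB-TG)*(TB*((TB + rB)/2)) :=
      mul_le_mul_of_nonneg_left hTBxB (by linarith)
    have h3 : 0 < ((TB-TG)*((TB + rB)/2) + (DG - DB))*TB := by nlinarith [hval, h2]
    rcases mul_pos_iff.mp h3 with ⟨hy, -⟩ | ⟨-, hTBneg⟩
    · linarith
    · linarith
  have hTGxB : TG < 2*((TB + rB)/2) := by linarith
  have h4 : rG < 2*((TB + rB)/2) - TG := by nlinarith [hrG2, hrG0, hf, hTGxB]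
  have hxGxB : (TG + rG)/2 < (TB + rB)/2 := by linarith
  have hxG0 : 0 ≤ (TG + rG)/2 := by linarith
  exact Real.sqrt_lt_sqrt hxG0 hxGxB

lemma key_ineq (k p n : ℝ) (hk : 2 ≤ k) (hp : k + 1 ≤ p) (hn : p + 1 ≤ n) :
    Real.sqrt ((((p-1)*n + (n-(p-1))*(n-(p-k+1))) +
      Real.sqrt (((p-1)*n + (n-(p-1))*(n-(p-k+1)))^2
        - 4*((p-1)*(p-k+1)*(n-(p-1))*(n-(p-k+1)))))/2) <
    Real.sqrt ((((k-1)*n + (n-(k-1))*(n-1)) +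
      Real.sqrt (((k-1)*n + (n-(k-1))*(n-1))^2
        - 4*((k-1)*1*(n-(k-1))*(n-1))))/2) := by
  apply step2
  · nlinarith
  · nlinarith
  · have : 0 < (k-1)*(n-(k-1)) := by nlinarith
    nlinarith
  · nlinarith [sq_nonneg ((k-1)*n - (n-(k-1))*(n-1)),
      mul_nonneg (mul_nonneg (by linarith : (0:ℝ) ≤ k-1) (by linarith : (0:ℝ) ≤ n-(k-1)))
        (by linarith : (0:ℝ) ≤ n-1)]
  · nlinarith [sq_nonneg ((p-1)*n - (n-(p-1))*(n-(p-k+1))),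
      mul_nonneg (mul_nonneg (mul_nonneg (by linarith : (0:ℝ) ≤ p-1)
        (by linarith : (0:ℝ) ≤ n-(p-1))) (by linarith : (0:ℝ) ≤ n-(p-k+1)))
        (by linarith : (0:ℝ) ≤ p-k+1)]
  · have h1 : (1:ℝ)*1 ≤ (p-k)*(n-p) :=
      mul_le_mul (by linarith) (by linarith) (by norm_num) (by linarith)
    nlinarith [h1]
  · have hid : (((k-1)*n + (n-(k-1))*(n-1)) - ((p-1)*n + (n-(p-1))*(n-(p-k+1))))
        * (((k-1)*n + (n-(k-1))*(n-1))^2 - 2*((k-1)*1*(n-(k-1))*(n-1)))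
        + ((p-1)*(p-k+1)*(n-(p-1))*(n-(p-k+1)) - (k-1)*1*(n-(k-1))*(n-1))
        * ((k-1)*n + (n-(k-1))*(n-1)) =
        242 + 500*(n-p-1) + 359*(n-p-1)^2 + 118*(n-p-1)^3 + 18*(n-p-1)^4 + 1*(n-p-1)^5 + 500*(p-k-1) + 973*(p-k-1)*(n-p-1) + 632*(p-k-1)*(n-p-1)^2 + 181*(p-k-1)*(n-p-1)^3 + 23*(p-k-1)*(n-p-1)^4 + 1*(p-k-1)*(n-p-1)^5 + 359*(p-k-1)^2 + 632*(p-k-1)^2*(n-p-1) + 339*(p-k-1)^2*(n-p-1)^2 + 71*(p-k-1)^2*(n-p-1)^3 + 5*(p-k-1)^2*(n-p-1)^4 + 118*(p-k-1)^3 + 181*(p-k-1)^3*(n-p-1) + 71*(p-k-1)^3*(n-p-1)^2 + 8*(p-k-1)^3*(n-p-1)^3 + 18*(p-k-1)^4 + 23*(p-k-1)^4*(n-p-1) + 5*(p-k-1)^4*(n-p-1)^2 + 1*(p-k-1)^5 + 1*(p-k-1)^5*(n-p-1) + 292*(k-2) + 521*(k-2)*(n-p-1) + 288*(k-2)*(n-p-1)^2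 + 64*(k-2)*(n-p-1)^3 + 5*(k-2)*(n-p-1)^4 + 521*(k-2)*(p-k-1) + 876*(k-2)*(p-k-1)*(n-p-1) + 431*(k-2)*(p-k-1)*(n-p-1)^2 + 81*(k-2)*(p-k-1)*(n-p-1)^3 + 5*(k-2)*(p-k-1)*(n-p-1)^4 + 288*(k-2)*(p-k-1)^2 + 431*(k-2)*(p-k-1)^2*(n-p-1) + 160*(k-2)*(p-k-1)^2*(n-p-1)^2 + 17*(k-2)*(p-k-1)^2*(n-p-1)^3 + 64*(k-2)*(p-k-1)^3 + 81*(k-2)*(p-k-1)^3*(n-p-1) + 17*(k-2)*(p-k-1)^3*(n-p-1)^2 + 5*(k-2)*(p-k-1)^4 + 5*(k-2)*(p-k-1)^4*(n-p-1) + 136*(k-2)^2 + 206*(k-2)^2*(n-p-1) + 79*(k-2)^2*(n-p-1)^2 + 9*(k-2)^2*(n-p-1)^3 + 206*(k-2)^2*(p-k-1) + 295*(k-2)^2*(p-k-1)*(n-p-1) + 98*(k-2)^2*(p-k-1)*(n-p-1)^2 + 9*(k-2)^2*(p-k-1)*(n-p-1)^3 + 79*(k-2)^2*(p-k-1)^2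 + 98*(k-2)^2*(p-k-1)^2*(n-p-1) + 19*(k-2)^2*(p-k-1)^2*(n-p-1)^2 + 9*(k-2)^2*(p-k-1)^3 + 9*(k-2)^2*(p-k-1)^3*(n-p-1) + 28*(k-2)^3 + 35*(k-2)^3*(n-p-1) + 7*(k-2)^3*(n-p-1)^2 + 35*(k-2)^3*(p-k-1) + 42*(k-2)^3*(p-k-1)*(n-p-1) + 7*(k-2)^3*(p-k-1)*(n-p-1)^2 + 7*(k-2)^3*(p-k-1)^2 + 7*(k-2)^3*(p-k-1)^2*(n-p-1) + 2*(k-2)^4 + 2*(k-2)^4*(n-p-1) + 2*(k-2)^4*(p-k-1) + 2*(k-2)^4*(p-k-1)*(n-p-1) := by ring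
    rw [hid]
    exact poly_pos (k-2) (p-k-1) (n-p-1) (by linarith) (by linarith) (by linarith)

/-- ρ(K_{p-1,n+k-p+1} ⊔ ̂K_{n-p+1,p-k+1}) < ρ(B_{n,k}). -/
theorem stmt1 (n k p : ℕ) (hk : 2 ≤ k) (hn : 2*k ≤ n) (hp1 : k+1 ≤ p) (hp2 : p ≤ n-1) :
    specRad (bipG n (p-1) (p-k+1)) < specRad (bipG n (k-1) 1) := by
  have hn4 : 4 ≤ n := by omega
  have hp3 : 3 ≤ p := by omega
  have hpn : p + 1 ≤ n := by omega
  rw [specRad_bipG n (p-1) (p-k+1) (by omega) (by omega) (by omega) (by omega),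
      specRad_bipG n (k-1) 1 (by omega) (by omega) (by omega) (by omega)]
  have c1 : ((p-1:ℕ):ℝ) = (p:ℝ)-1 := by
    rw [Nat.cast_sub (by omega : 1 ≤ p), Nat.cast_one]
  have c2 : ((p-k+1:ℕ):ℝ) = (p:ℝ)-(k:ℝ)+1 := by
    rw [Nat.cast_add, Nat.cast_sub (by omega : k ≤ p), Nat.cast_one]
  have c3 : ((k-1:ℕ):ℝ) = (k:ℝ)-1 := by
    rw [Nat.cast_sub (by omega : 1 ≤ k), Nat.cast_one]
  rw [c1, c2, c3, Nat.cast_one]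
  exact key_ineq (k:ℝ) (p:ℝ) (n:ℝ) (by exact_mod_cast hk)
    (by exact_mod_cast hp1) (by exact_mod_cast hpn)
end

section
/- Let G be a graph on vertex set [n] and let x, y be two vertices of G. Then the spectral radius of the shifted graph S_{xy}(G) is at least the spectral radius of G. -/
set_option maxHeartbeats 1000000
set_option synthInstance.maxHeartbeats 400000

open SimpleGraph

namespace Csik

variable {n : ℕ}

/-- The real adjacency matrix with the classical decidability instance (as in `specRad`). -/
noncomputable def adjM (H : SimpleGraph (Fin n)) : Matrix (Fin n) (Fin n) ℝ :=
  @SimpleGraph.adjMatrix ℝ (Fin n) H (Classical.decRel _) _ _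

/-- The quadratic form of the adjacency matrix. -/
noncomputable def Q (H : SimpleGraph (Fin n)) (u : Fin n → ℝ) : ℝ :=
  ∑ i, ∑ j, adjM H i j * u j * u i

lemma adjM_nonneg (H : SimpleGraph (Fin n)) (i j : Fin n) : 0 ≤ adjM H i j := by
  rw [adjM, SimpleGraph.adjMatrix_apply]
  split_ifs <;> norm_num

open scoped Classical in
lemma Q_eq (H : SimpleGraph (Fin n)) (u : Fin n → ℝ) :
    Q H u = ∑ p ∈ Finset.univ.filter (fun p : Fin n × Fin n => H.Adj p.1 p.2),
      u p.2 * u p.1 := by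
  rw [Q, ← Finset.sum_product', Finset.univ_product_univ, Finset.sum_filter]
  refine Finset.sum_congr rfl fun p _ => ?_
  rw [adjM, SimpleGraph.adjMatrix_apply]
  split_ifs <;> simp

/-- Generic sum-comparison via an injection. -/
lemma sum_pairs_le {s t : Finset (Fin n × Fin n)} {f g : Fin n × Fin n → ℝ}
    (σ : Fin n × Fin n → Fin n × Fin n)
    (hinj : ∀ p ∈ s, ∀ q ∈ s, σ p = σ q → p = q)
    (hmem : ∀ p ∈ s, σ p ∈ t)
    (hle : ∀ p ∈ s, f p ≤ g (σ p)) (hg : ∀ p ∈ t, 0 ≤ g p) :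
    ∑ p ∈ s, f p ≤ ∑ p ∈ t, g p := by
  classical
  calc ∑ p ∈ s, f p ≤ ∑ p ∈ s, g (σ p) := Finset.sum_le_sum hle
    _ = ∑ p ∈ s.image σ, g p := (Finset.sum_image hinj).symm
    _ ≤ ∑ p ∈ t, g p := Finset.sum_le_sum_of_subset_of_nonneg
        (Finset.image_subset_iff.2 hmem) (fun p hp _ => hg p hp)

variable {G : SimpleGraph (Fin n)} {x y : Fin n}

lemma cond_iff (G : SimpleGraph (Fin n)) (x y i j : Fin n) :
    (y ∈ s(i, j) ∧ x ∉ s(i, j) ∧ shiftMap x y s(i, j) ∉ G.edgeSet) ↔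
      ((i = y ∨ j = y) ∧ i ≠ x ∧ j ≠ x ∧
        ¬ G.Adj (if i = y then x else i) (if j = y then x else j)) := by
  rw [shiftMap, Sym2.map_pair_eq, Sym2.mem_iff, Sym2.mem_iff, SimpleGraph.mem_edgeSet]
  constructor
  · rintro ⟨h1, h2, h3⟩
    exact ⟨h1.imp Eq.symm Eq.symm, fun h => h2 (Or.inl h.symm), fun h => h2 (Or.inr h.symm), h3⟩
  · rintro ⟨h1, h2, h3, h4⟩
    exact ⟨h1.imp Eq.symm Eq.symm,
      fun h => h.elim (fun h => h2 h.symm) (fun h => h3 h.symm), h4⟩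

lemma shift_adj_of_not_cond (hij : G.Adj i j)
    (h : ¬((i = y ∨ j = y) ∧ i ≠ x ∧ j ≠ x ∧
        ¬ G.Adj (if i = y then x else i) (if j = y then x else j))) :
    (shiftGraph G x y).Adj i j := by
  rw [shiftGraph, SimpleGraph.fromEdgeSet_adj]
  refine ⟨⟨s(i, j), G.mem_edgeSet.2 hij, ?_⟩, hij.ne⟩
  dsimp only
  rw [if_neg (fun hc => h ((cond_iff G x y i j).1 hc))]

lemma shift_adj_of_cond (hxy : x ≠ y) (hij : G.Adj i j)
    (h : (i = y ∨ j = y) ∧ i ≠ x ∧ j ≠ x ∧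
        ¬ G.Adj (if i = y then x else i) (if j = y then x else j)) :
    (shiftGraph G x y).Adj (if i = y then x else i) (if j = y then x else j) := by
  rw [shiftGraph, SimpleGraph.fromEdgeSet_adj]
  constructor
  · refine ⟨s(i, j), G.mem_edgeSet.2 hij, ?_⟩
    dsimp only
    rw [if_pos ((cond_iff G x y i j).2 h), shiftMap, Sym2.map_pair_eq]
  · obtain ⟨h1, h2, h3, -⟩ := h
    by_cases hiy : i = y
    · have hjy : j ≠ y := fun hh => hij.ne (hiy.trans hh.symm)
      rw [if_pos hiy, if_neg hjy]
      exact fun hh => h3 hh.symm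
    · have hjy : j = y := by
        rcases h1 with h | h
        · exact absurd h hiy
        · exact h
      rw [if_neg hiy, if_pos hjy]
      exact h2

lemma shift_adj_of_mem_x (hij : G.Adj i j) (h : i = x ∨ j = x) :
    (shiftGraph G x y).Adj i j :=
  shift_adj_of_not_cond hij (fun hc => h.elim (fun h1 => hc.2.1 h1) (fun h1 => hc.2.2.1 h1))

lemma rep_inj {a b : Fin n} (ha : a ≠ x) (hb : b ≠ x)
    (h : (if a = y then x else a) = (if b = y then x else b)) : a = b := by
  by_cases hay : a = y <;> by_cases hby : b = y
  · rw [hay, hby]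
  · rw [if_pos hay, if_neg hby] at h; exact absurd h.symm hb
  · rw [if_neg hay, if_pos hby] at h; exact absurd h ha
  · rwa [if_neg hay, if_neg hby] at h

open scoped Classical in
lemma comb1 (hxy : x ≠ y) {u : Fin n → ℝ} (hu : ∀ i, 0 ≤ u i) (hyx : u y ≤ u x) :
    Q G u ≤ Q (shiftGraph G x y) u := by
  rw [Q_eq, Q_eq]
  refine sum_pairs_le (fun p : Fin n × Fin n =>
    if (p.1 = y ∨ p.2 = y) ∧ p.1 ≠ x ∧ p.2 ≠ x ∧
        ¬ G.Adj (if p.1 = y then x else p.1) (if p.2 = y then x else p.2)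
      then ((if p.1 = y then x else p.1), (if p.2 = y then x else p.2)) else p)
    ?_ ?_ ?_ ?_
  · intro p hp q hq h
    rw [Finset.mem_filter] at hp hq
    by_cases cp : (p.1 = y ∨ p.2 = y) ∧ p.1 ≠ x ∧ p.2 ≠ x ∧
        ¬ G.Adj (if p.1 = y then x else p.1) (if p.2 = y then x else p.2) <;>
      by_cases cq : (q.1 = y ∨ q.2 = y) ∧ q.1 ≠ x ∧ q.2 ≠ x ∧
        ¬ G.Adj (if q.1 = y then x else q.1) (if q.2 = y then x else q.2)
    · simp only [if_pos cp, if_pos cq, Prod.mk.injEq] at h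
      exact Prod.ext (rep_inj cp.2.1 cq.2.1 h.1) (rep_inj cp.2.2.1 cq.2.2.1 h.2)
    · rw [if_pos cp, if_neg cq] at h
      exfalso
      apply cp.2.2.2
      have hq2 := hq.2
      rw [← h] at hq2
      exact hq2
    · rw [if_neg cp, if_pos cq] at h
      exfalso
      apply cq.2.2.2
      have hp2 := hp.2
      rw [h] at hp2
      exact hp2
    · rwa [if_neg cp, if_neg cq] at h
  · intro p hp
    rw [Finset.mem_filter] at hp
    rw [Finset.mem_filter]
    refine ⟨Finset.mem_univ _, ?_⟩
    by_cases cp : (p.1 = y ∨ p.2 = y) ∧ p.1 ≠ x ∧ p.2 ≠ x ∧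
        ¬ G.Adj (if p.1 = y then x else p.1) (if p.2 = y then x else p.2)
    · simp only [if_pos cp]
      exact shift_adj_of_cond hxy hp.2 cp
    · simp only [if_neg cp]
      exact shift_adj_of_not_cond hp.2 cp
  · intro p hp
    rw [Finset.mem_filter] at hp
    by_cases cp : (p.1 = y ∨ p.2 = y) ∧ p.1 ≠ x ∧ p.2 ≠ x ∧
        ¬ G.Adj (if p.1 = y then x else p.1) (if p.2 = y then x else p.2)
    · simp only [if_pos cp]
      obtain ⟨h1, -, -, -⟩ := cp
      have hne : p.1 ≠ p.2 := hp.2.ne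
      rcases h1 with h1 | h1
      · have h2y : p.2 ≠ y := fun hh => hne (h1.trans hh.symm)
        rw [if_neg h2y, if_pos h1, h1]
        exact mul_le_mul_of_nonneg_left hyx (hu p.2)
      · have h1y : p.1 ≠ y := fun hh => hne (hh.trans h1.symm)
        rw [if_pos h1, if_neg h1y, h1]
        exact mul_le_mul_of_nonneg_right hyx (hu p.1)
    · simp only [if_neg cp]
      exact le_rfl
  · intro p _
    exact mul_nonneg (hu _) (hu _)

open scoped Classical in
lemma comb2 (hxy : x ≠ y) {u : Fin n → ℝ} (hu : ∀ i, 0 ≤ u i) (hxyu : u x ≤ u y) :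
    Q G u ≤ Q (shiftGraph G x y) (u ∘ (Equiv.swap x y)) := by
  rw [Q_eq, Q_eq]
  refine sum_pairs_le (fun p : Fin n × Fin n =>
    if (p.1 = x ∨ p.2 = x) ∧ p.1 ≠ y ∧ p.2 ≠ y ∧
        ¬ G.Adj (if p.1 = x then y else p.1) (if p.2 = x then y else p.2)
      then p else ((Equiv.swap x y) p.1, (Equiv.swap x y) p.2))
    ?_ ?_ ?_ ?_
  · intro p hp q hq h
    rw [Finset.mem_filter] at hp hq
    by_cases cp : (p.1 = x ∨ p.2 = x) ∧ p.1 ≠ y ∧ p.2 ≠ y ∧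
        ¬ G.Adj (if p.1 = x then y else p.1) (if p.2 = x then y else p.2) <;>
      by_cases cq : (q.1 = x ∨ q.2 = x) ∧ q.1 ≠ y ∧ q.2 ≠ y ∧
        ¬ G.Adj (if q.1 = x then y else q.1) (if q.2 = x then y else q.2)
    · rwa [if_pos cp, if_pos cq] at h
    · -- σ p = p = (swap q.1, swap q.2); then q = (swap p.1, swap p.2) and swap p.i = rep' p.i
      rw [if_pos cp, if_neg cq, Prod.ext_iff] at h
      exfalso
      apply cp.2.2.2
      have hq1 : q.1 = (if p.1 = x then y else p.1) := by
        have := congrArg (Equiv.swap x y) h.1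
        rw [Equiv.swap_apply_self] at this
        rw [← this]
        by_cases h1 : p.1 = x
        · rw [if_pos h1, h1, Equiv.swap_apply_left]
        · rw [if_neg h1, Equiv.swap_apply_of_ne_of_ne h1 cp.2.1]
      have hq2 : q.2 = (if p.2 = x then y else p.2) := by
        have := congrArg (Equiv.swap x y) h.2
        rw [Equiv.swap_apply_self] at this
        rw [← this]
        by_cases h2 : p.2 = x
        · rw [if_pos h2, h2, Equiv.swap_apply_left]
        · rw [if_neg h2, Equiv.swap_apply_of_ne_of_ne h2 cp.2.2.1]
      have := hq.2
      rw [hq1, hq2] at this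
      exact this
    · rw [if_neg cp, if_pos cq, Prod.ext_iff] at h
      exfalso
      apply cq.2.2.2
      have hp1 : p.1 = (if q.1 = x then y else q.1) := by
        have := congrArg (Equiv.swap x y) h.1
        rw [Equiv.swap_apply_self] at this
        rw [this]
        by_cases h1 : q.1 = x
        · rw [if_pos h1, h1, Equiv.swap_apply_left]
        · rw [if_neg h1, Equiv.swap_apply_of_ne_of_ne h1 cq.2.1]
      have hp2 : p.2 = (if q.2 = x then y else q.2) := by
        have := congrArg (Equiv.swap x y) h.2
        rw [Equiv.swap_apply_self] at this
        rw [this]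
        by_cases h2 : q.2 = x
        · rw [if_pos h2, h2, Equiv.swap_apply_left]
        · rw [if_neg h2, Equiv.swap_apply_of_ne_of_ne h2 cq.2.2.1]
      have := hp.2
      rw [hp1, hp2] at this
      exact this
    · rw [if_neg cp, if_neg cq, Prod.ext_iff] at h
      exact Prod.ext ((Equiv.swap x y).injective h.1) ((Equiv.swap x y).injective h.2)
  · intro p hp
    rw [Finset.mem_filter] at hp
    rw [Finset.mem_filter]
    have hadj := hp.2
    refine ⟨Finset.mem_univ _, ?_⟩
    by_cases cp : (p.1 = x ∨ p.2 = x) ∧ p.1 ≠ y ∧ p.2 ≠ y ∧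
        ¬ G.Adj (if p.1 = x then y else p.1) (if p.2 = x then y else p.2)
    · simp only [if_pos cp]
      exact shift_adj_of_mem_x hadj cp.1
    · simp only [if_neg cp]
      -- goal: (shiftGraph G x y).Adj (swap p.1) (swap p.2)
      obtain ⟨a, b⟩ := p
      simp only at hadj cp ⊢
      by_cases hax : a = x
      · by_cases hby : b = y
        · rw [hax, hby, Equiv.swap_apply_left, Equiv.swap_apply_right]
          refine shift_adj_of_mem_x ?_ (Or.inr rfl)
          rw [hax, hby] at hadj
          exact hadj.symm
        · have hbx : b ≠ x := fun hh => hadj.ne (hax.trans hh.symm)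
          have hAyb : G.Adj y b := by
            by_contra hA
            refine cp ⟨Or.inl hax, ?_, hby, ?_⟩
            · rw [hax]; exact hxy
            · rw [if_pos hax, if_neg hbx]; exact hA
          rw [hax, Equiv.swap_apply_left, Equiv.swap_apply_of_ne_of_ne hbx hby]
          refine shift_adj_of_not_cond hAyb (fun hc => ?_)
          have hlast := hc.2.2.2
          rw [if_pos rfl, if_neg hby] at hlast
          apply hlast
          rw [← hax]
          exact hadj
      · by_cases hbx : b = x
        · by_cases hay : a = y
          · rw [hay, hbx, Equiv.swap_apply_right, Equiv.swap_apply_left]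
            refine shift_adj_of_mem_x ?_ (Or.inl rfl)
            rw [hay, hbx] at hadj
            exact hadj.symm
          · have hAay : G.Adj a y := by
              by_contra hA
              refine cp ⟨Or.inr hbx, hay, ?_, ?_⟩
              · rw [hbx]; exact hxy
              · rw [if_neg hax, if_pos hbx]; exact hA
            rw [hbx, Equiv.swap_apply_left, Equiv.swap_apply_of_ne_of_ne hax hay]
            refine shift_adj_of_not_cond hAay (fun hc => ?_)
            have hlast := hc.2.2.2
            rw [if_neg hay, if_pos rfl] at hlast
            apply hlast
            rw [← hbx]
            exact hadj
        · by_cases hay : a = y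
          · have hby : b ≠ y := fun hh => hadj.ne (hay.trans hh.symm)
            rw [hay, Equiv.swap_apply_right, Equiv.swap_apply_of_ne_of_ne hbx hby]
            have hAyb : G.Adj y b := by rw [← hay]; exact hadj
            by_cases hA : G.Adj x b
            · exact shift_adj_of_not_cond hA
                (fun hc => hc.1.elim (fun h1 => hxy h1) (fun h1 => hby h1))
            · have := shift_adj_of_cond hxy hAyb
                ⟨Or.inl rfl, hxy.symm, hbx, by rw [if_pos rfl, if_neg hby]; exact hA⟩
              rwa [if_pos rfl, if_neg hby] at this
          · by_cases hby : b = y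
            · rw [hby, Equiv.swap_apply_right, Equiv.swap_apply_of_ne_of_ne hax hay]
              have hAay : G.Adj a y := by rw [← hby]; exact hadj
              by_cases hA : G.Adj a x
              · exact shift_adj_of_not_cond hA
                  (fun hc => hc.1.elim (fun h1 => hay h1) (fun h1 => hxy h1))
              · have := shift_adj_of_cond hxy hAay
                  ⟨Or.inr rfl, hax, hxy.symm, by rw [if_neg hay, if_pos rfl]; exact hA⟩
                rwa [if_neg hay, if_pos rfl] at this
            · rw [Equiv.swap_apply_of_ne_of_ne hax hay, Equiv.swap_apply_of_ne_of_ne hbx hby]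
              exact shift_adj_of_not_cond hadj (fun hc => hc.1.elim hay hby)
  · intro p hp
    rw [Finset.mem_filter] at hp
    by_cases cp : (p.1 = x ∨ p.2 = x) ∧ p.1 ≠ y ∧ p.2 ≠ y ∧
        ¬ G.Adj (if p.1 = x then y else p.1) (if p.2 = x then y else p.2)
    · simp only [if_pos cp]
      obtain ⟨h1, h2, h3, -⟩ := cp
      simp only [Function.comp_apply]
      rcases h1 with h1 | h1
      · have hp2x : p.2 ≠ x := fun hh => hp.2.ne (h1.trans hh.symm)
        rw [Equiv.swap_apply_of_ne_of_ne hp2x h3, h1, Equiv.swap_apply_left]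
        exact mul_le_mul_of_nonneg_left hxyu (hu p.2)
      · have hp1x : p.1 ≠ x := fun hh => hp.2.ne (hh.trans h1.symm)
        rw [Equiv.swap_apply_of_ne_of_ne hp1x h2, h1, Equiv.swap_apply_left]
        exact mul_le_mul_of_nonneg_right hxyu (hu p.1)
    · simp only [if_neg cp]
      simp only [Function.comp_apply, Equiv.swap_apply_self, le_refl]
  · intro p _
    exact mul_nonneg (hu _) (hu _)

/-- Combined: a suitable nonnegative rearrangement with the same norm. -/
lemma comb_le (G : SimpleGraph (Fin n)) (hxy : x ≠ y)
    (u : Fin n → ℝ) (hu : ∀ i, 0 ≤ u i) :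
    ∃ u' : Fin n → ℝ, (∀ i, 0 ≤ u' i) ∧ (∑ i, u' i ^ 2 = ∑ i, u i ^ 2) ∧
      Q G u ≤ Q (shiftGraph G x y) u' := by
  by_cases h : u y ≤ u x
  · exact ⟨u, hu, rfl, comb1 hxy hu h⟩
  · refine ⟨u ∘ (Equiv.swap x y), fun i => hu _, ?_, comb2 hxy hu (le_of_not_ge h)⟩
    exact Equiv.sum_comp (Equiv.swap x y) (fun i => u i ^ 2)

lemma Q_le_abs (H : SimpleGraph (Fin n)) (v : Fin n → ℝ) :
    Q H v ≤ Q H (fun i => |v i|) := by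
  refine Finset.sum_le_sum fun i _ => Finset.sum_le_sum fun j _ => ?_
  rw [mul_assoc, mul_assoc]
  refine mul_le_mul_of_nonneg_left ?_ (adjM_nonneg H i j)
  calc v j * v i ≤ |v j * v i| := le_abs_self _
    _ = |v j| * |v i| := abs_mul _ _

/-- The adjacency operator on Euclidean space. -/
noncomputable def T (H : SimpleGraph (Fin n)) :
    EuclideanSpace ℝ (Fin n) →ₗ[ℝ] EuclideanSpace ℝ (Fin n) :=
  Matrix.toEuclideanLin (adjM H)

lemma T_isSymm (H : SimpleGraph (Fin n)) : (T H).IsSymmetric := by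
  rw [T, ← Matrix.isHermitian_iff_isSymmetric]
  show Matrix.conjTranspose (adjM H) = adjM H
  ext i j
  rw [Matrix.conjTranspose_apply, star_trivial, adjM, SimpleGraph.adjMatrix_apply,
    SimpleGraph.adjMatrix_apply]
  by_cases h : H.Adj i j
  · rw [if_pos h, if_pos h.symm]
  · rw [if_neg h, if_neg (fun hh => h hh.symm)]

lemma T_apply_coord (H : SimpleGraph (Fin n)) (u : EuclideanSpace ℝ (Fin n)) (i : Fin n) :
    (T H u) i = ∑ j, adjM H i j * ((WithLp.equiv 2 (Fin n → ℝ)) u) j := rfl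

lemma inner_T (H : SimpleGraph (Fin n)) (u : EuclideanSpace ℝ (Fin n)) :
    (inner ℝ (T H u) u : ℝ) = Q H ((WithLp.equiv 2 (Fin n → ℝ)) u) := by
  calc (inner ℝ (T H u) u : ℝ) = ∑ i, (T H u) i * u i := by
        rw [PiLp.inner_apply]
        exact Finset.sum_congr rfl fun i _ => by rw [RCLike.inner_apply, conj_trivial, mul_comm]
    _ = ∑ i, (∑ j, adjM H i j * ((WithLp.equiv 2 (Fin n → ℝ)) u) j)
          * ((WithLp.equiv 2 (Fin n → ℝ)) u) i :=
        Finset.sum_congr rfl fun i _ => rfl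
    _ = Q H ((WithLp.equiv 2 (Fin n → ℝ)) u) := by
        rw [Q]
        exact Finset.sum_congr rfl fun i _ => by rw [Finset.sum_mul]

lemma norm_sq_eq (u : EuclideanSpace ℝ (Fin n)) :
    ‖u‖ ^ 2 = ∑ i, (((WithLp.equiv 2 (Fin n → ℝ)) u) i) ^ 2 := by
  rw [EuclideanSpace.norm_eq, Real.sq_sqrt (Finset.sum_nonneg fun i _ => sq_nonneg _)]
  refine Finset.sum_congr rfl fun i _ => ?_
  rw [Real.norm_eq_abs, sq_abs]
  exact rfl

/-- The top of the Rayleigh quotient. -/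
noncomputable def lam (H : SimpleGraph (Fin n)) : ℝ :=
  ⨆ u : {u : EuclideanSpace ℝ (Fin n) // u ≠ 0},
    (inner ℝ (T H u) u : ℝ) / ‖(u : EuclideanSpace ℝ (Fin n))‖ ^ 2

lemma rayleigh_le (H : SimpleGraph (Fin n)) (u : EuclideanSpace ℝ (Fin n)) :
    (inner ℝ (T H u) u : ℝ) / ‖u‖ ^ 2 ≤ ‖LinearMap.toContinuousLinearMap (T H)‖ := by
  by_cases hu : u = 0
  · simp only [hu, inner_zero_right, norm_zero, map_zero, zero_div]
    exact norm_nonneg _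
  · have hpos : (0 : ℝ) < ‖u‖ ^ 2 := pow_pos (norm_pos_iff.2 hu) 2
    rw [div_le_iff₀ hpos]
    calc (inner ℝ (T H u) u : ℝ) ≤ ‖T H u‖ * ‖u‖ := real_inner_le_norm _ _
      _ ≤ (‖LinearMap.toContinuousLinearMap (T H)‖ * ‖u‖) * ‖u‖ := by
          refine mul_le_mul_of_nonneg_right ?_ (norm_nonneg _)
          have h2 := (LinearMap.toContinuousLinearMap (T H)).le_opNorm u
          simpa using h2
      _ = ‖LinearMap.toContinuousLinearMap (T H)‖ * ‖u‖ ^ 2 := by ring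

lemma ray_bdd (H : SimpleGraph (Fin n)) :
    BddAbove (Set.range fun u : {u : EuclideanSpace ℝ (Fin n) // u ≠ 0} =>
      (inner ℝ (T H u) u : ℝ) / ‖(u : EuclideanSpace ℝ (Fin n))‖ ^ 2) :=
  ⟨‖LinearMap.toContinuousLinearMap (T H)‖, by rintro r ⟨u, rfl⟩; exact rayleigh_le H u⟩

lemma eig_eq_ray (H : SimpleGraph (Fin n)) {μ : ℝ}
    (h : Module.End.HasEigenvalue (T H) μ) :
    ∃ u : EuclideanSpace ℝ (Fin n), u ≠ 0 ∧ μ = (inner ℝ (T H u) u : ℝ) / ‖u‖ ^ 2 := by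
  obtain ⟨v, hm, h0⟩ := h.exists_hasEigenvector
  rw [Module.End.mem_eigenspace_iff] at hm
  refine ⟨v, h0, ?_⟩
  have hn0 : ‖v‖ ≠ 0 := norm_ne_zero_iff.2 h0
  rw [hm, real_inner_smul_left, real_inner_self_eq_norm_sq, mul_div_assoc,
    div_self (pow_ne_zero 2 hn0), mul_one]

lemma eig_le_lam (H : SimpleGraph (Fin n)) {μ : ℝ}
    (h : Module.End.HasEigenvalue (T H) μ) : μ ≤ lam H := by
  obtain ⟨u, hu0, he⟩ := eig_eq_ray H h
  exact he ▸ le_ciSup (ray_bdd H) (⟨u, hu0⟩ : {u : EuclideanSpace ℝ (Fin n) // u ≠ 0})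

lemma hasEig_iff (A : Matrix (Fin n) (Fin n) ℝ) (μ : ℝ) :
    Module.End.HasEigenvalue (Matrix.toLin' A) μ ↔
      Module.End.HasEigenvalue (Matrix.toEuclideanLin A) μ := by
  constructor
  · intro h
    obtain ⟨v, hm, h0⟩ := h.exists_hasEigenvector
    rw [Module.End.mem_eigenspace_iff] at hm
    refine Module.End.hasEigenvalue_of_hasEigenvector
      (x := (WithLp.equiv 2 (Fin n → ℝ)).symm v) ⟨?_, ?_⟩
    · rw [Module.End.mem_eigenspace_iff]
      exact congrArg (WithLp.equiv 2 (Fin n → ℝ)).symm hm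
    · intro hh
      exact h0 (by simpa using congrArg (WithLp.equiv 2 (Fin n → ℝ)) hh)
  · intro h
    obtain ⟨w, hm, h0⟩ := h.exists_hasEigenvector
    rw [Module.End.mem_eigenspace_iff] at hm
    refine Module.End.hasEigenvalue_of_hasEigenvector
      (x := (WithLp.equiv 2 (Fin n → ℝ)) w) ⟨?_, ?_⟩
    · rw [Module.End.mem_eigenspace_iff]
      exact congrArg (WithLp.equiv 2 (Fin n → ℝ)) hm
    · intro hh
      exact h0 (by simpa using congrArg (WithLp.equiv 2 (Fin n → ℝ)).symm hh)

lemma lam_eig (H : SimpleGraph (Fin n)) (hn : 0 < n) :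
    Module.End.HasEigenvalue (T H) (lam H) := by
  haveI : Nonempty (Fin n) := ⟨⟨0, hn⟩⟩
  haveI : Nontrivial (EuclideanSpace ℝ (Fin n)) := by infer_instance
  exact (T_isSymm H).hasEigenvalue_iSup_of_finiteDimensional

lemma lam_nonneg (H : SimpleGraph (Fin n)) (hn : 0 < n) : 0 ≤ lam H := by
  set i0 : Fin n := ⟨0, hn⟩
  set u0 : EuclideanSpace ℝ (Fin n) := EuclideanSpace.single i0 1 with hu0
  have h1 : u0 i0 = 1 := by rw [hu0, EuclideanSpace.single_apply, if_pos rfl]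
  have hu0ne : u0 ≠ 0 := fun hc => by
    have h2 : (1 : ℝ) = 0 := by rw [← h1, hc]; rfl
    exact one_ne_zero h2
  have hz : (inner ℝ (T H u0) u0 : ℝ) = 0 := by
    rw [inner_T, Q]
    refine Finset.sum_eq_zero fun i _ => Finset.sum_eq_zero fun j _ => ?_
    by_cases hj : j = i0
    · by_cases hi : i = i0
      · have hA : adjM H i j = 0 := by
          rw [hi, hj, adjM, SimpleGraph.adjMatrix_apply, if_neg (H.irrefl)]
        rw [hA, zero_mul, zero_mul]
      · have : ((WithLp.equiv 2 (Fin n → ℝ)) u0) i = 0 := by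
          rw [show ((WithLp.equiv 2 (Fin n → ℝ)) u0) i = u0 i from rfl, hu0,
            EuclideanSpace.single_apply, if_neg hi]
        rw [this, mul_zero]
    · have : ((WithLp.equiv 2 (Fin n → ℝ)) u0) j = 0 := by
        rw [show ((WithLp.equiv 2 (Fin n → ℝ)) u0) j = u0 j from rfl, hu0,
          EuclideanSpace.single_apply, if_neg hj]
      rw [this, mul_zero, zero_mul]
  have hray : (inner ℝ (T H u0) u0 : ℝ) / ‖u0‖ ^ 2 = 0 := by rw [hz, zero_div]
  calc (0 : ℝ) = (inner ℝ (T H u0) u0 : ℝ) / ‖u0‖ ^ 2 := hray.symm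
    _ ≤ lam H := le_ciSup (ray_bdd H) (⟨u0, hu0ne⟩ : {u : EuclideanSpace ℝ (Fin n) // u ≠ 0})

end Csik

open scoped Classical in
lemma shiftGraph_self {V : Type*} [DecidableEq V] (G : SimpleGraph V) (x : V) :
    shiftGraph G x x = G := by
  rw [shiftGraph]
  have himg : ((fun e => if x ∈ e ∧ x ∉ e ∧ shiftMap x x e ∉ G.edgeSet
      then shiftMap x x e else e) '' G.edgeSet) = G.edgeSet := by
    have : ∀ e ∈ G.edgeSet, (if x ∈ e ∧ x ∉ e ∧ shiftMap x x e ∉ G.edgeSet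
        then shiftMap x x e else e) = id e := by
      intro e _
      rw [if_neg (fun hc => hc.2.1 hc.1)]
      rfl
    rw [Set.image_congr this, Set.image_id]
  rw [himg, SimpleGraph.fromEdgeSet_edgeSet]

/-- Csikvári: the shift does not decrease the spectral radius. -/
theorem stmt6 (n : ℕ) (G : SimpleGraph (Fin n)) (x y : Fin n) :
    specRad G ≤ specRad (shiftGraph G x y) := by
  by_cases hxy : x = y
  · rw [hxy, shiftGraph_self]
  have hspec : ∀ H : SimpleGraph (Fin n), specRad H =
      sSup {μ : ℝ | Module.End.HasEigenvalue (Matrix.toLin' (Csik.adjM H)) μ} :=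
    fun H => rfl
  rcases Nat.eq_zero_or_pos n with h0 | hn
  · subst h0
    have hempty : ∀ H : SimpleGraph (Fin 0),
        {μ : ℝ | Module.End.HasEigenvalue (Matrix.toLin' (Csik.adjM H)) μ} = ∅ := by
      intro H
      ext μ
      simp only [Set.mem_setOf_eq, Set.mem_empty_iff_false, iff_false]
      intro h
      obtain ⟨v, -, h0v⟩ := h.exists_hasEigenvector
      exact h0v (funext fun i => i.elim0)
    rw [hspec, hspec, hempty, hempty]
  · rw [hspec, hspec]
    have hS'bdd : BddAbove {μ : ℝ | Module.End.HasEigenvalue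
        (Matrix.toLin' (Csik.adjM (shiftGraph G x y))) μ} :=
      ⟨Csik.lam (shiftGraph G x y),
        fun μ hμ => Csik.eig_le_lam _ ((Csik.hasEig_iff _ μ).1 hμ)⟩
    have hlam'_le : Csik.lam (shiftGraph G x y) ≤ sSup {μ : ℝ | Module.End.HasEigenvalue
        (Matrix.toLin' (Csik.adjM (shiftGraph G x y))) μ} :=
      le_csSup hS'bdd ((Csik.hasEig_iff _ _).2 (Csik.lam_eig _ hn))
    refine Real.sSup_le (fun μ hμ => ?_) (le_trans (Csik.lam_nonneg _ hn) hlam'_le)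
    have hμ' := (Csik.hasEig_iff _ μ).1 hμ
    obtain ⟨v, hv0, hveq⟩ := Csik.eig_eq_ray G hμ'
    set w : Fin n → ℝ := fun i => |((WithLp.equiv 2 (Fin n → ℝ)) v) i| with hw
    obtain ⟨u', hu'nn, hu'sum, hQ⟩ := Csik.comb_le G hxy w (fun i => abs_nonneg _)
    set z : EuclideanSpace ℝ (Fin n) := (WithLp.equiv 2 (Fin n → ℝ)).symm u' with hz
    have hzu : (WithLp.equiv 2 (Fin n → ℝ)) z = u' := rfl
    have hvpos : (0 : ℝ) < ‖v‖ ^ 2 := pow_pos (norm_pos_iff.2 hv0) 2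
    have hwsum : ∑ i, w i ^ 2 = ∑ i, ((WithLp.equiv 2 (Fin n → ℝ)) v) i ^ 2 :=
      Finset.sum_congr rfl fun i _ => sq_abs _
    have hnormz : ‖z‖ ^ 2 = ‖v‖ ^ 2 := by
      rw [Csik.norm_sq_eq, Csik.norm_sq_eq, hzu]
      exact hu'sum.trans hwsum
    have hzpos : (0 : ℝ) < ‖z‖ ^ 2 := by rw [hnormz]; exact hvpos
    have hz0 : z ≠ 0 := by
      intro hc
      rw [hc, norm_zero] at hzpos
      norm_num at hzpos
    have hchain : μ ≤ (inner ℝ (Csik.T (shiftGraph G x y) z) z : ℝ) / ‖z‖ ^ 2 := by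
      rw [hveq, Csik.inner_T, Csik.inner_T, hzu, hnormz]
      gcongr
      exact (Csik.Q_le_abs G _).trans hQ
    have hray_le : (inner ℝ (Csik.T (shiftGraph G x y) z) z : ℝ) / ‖z‖ ^ 2
        ≤ Csik.lam (shiftGraph G x y) :=
      le_ciSup (Csik.ray_bdd _) (⟨z, hz0⟩ : {u : EuclideanSpace ℝ (Fin n) // u ≠ 0})
    exact hchain.trans (hray_le.trans hlam'_le)
end

section
/- Let G be a connected graph on vertex set [n] and let x, y be two vertices of G. Then ρ(S_{xy}(G)) > ρ(G) unless S_{xy}(G) is isomorphic to G. -/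
open SimpleGraph

namespace Stmt7A
open Module.End Finset

set_option linter.unusedSectionVars false

/-! ### indicators -/

open scoped Classical in
noncomputable def ind (p : Prop) : ℝ := if p then 1 else 0
lemma ind_pos {p : Prop} (h : p) : ind p = 1 := by rw [ind, if_pos h]
lemma ind_neg {p : Prop} (h : ¬p) : ind p = 0 := by rw [ind, if_neg h]
lemma ind_nonneg (p : Prop) : 0 ≤ ind p := by
  by_cases h : p
  · rw [ind_pos h]; norm_num
  · rw [ind_neg h]

/-! ### combinatorics of the shift -/

section Comb
variable {V : Type*} [DecidableEq V]

def mv (G : SimpleGraph V) (x y v : V) : Prop := v ≠ x ∧ G.Adj v y ∧ ¬ G.Adj v x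

lemma mv_ne (G : SimpleGraph V) {x y v : V} (h : mv G x y v) : x ≠ y := by
  rintro rfl; exact h.2.2 h.2.1

variable (G : SimpleGraph V) (x y : V)

lemma mv_not_x : ¬ mv G x y x := fun h => h.1 rfl
lemma mv_not_y : ¬ mv G x y y := fun h => G.irrefl h.2.1

lemma shiftGraph_adj (u v : V) :
    (shiftGraph G x y).Adj u v ↔
      ((G.Adj u v ∧ ¬((u = y ∧ mv G x y v) ∨ (v = y ∧ mv G x y u))) ∨
       ((u = x ∧ mv G x y v) ∨ (v = x ∧ mv G x y u))) := by
  rw [shiftGraph, SimpleGraph.fromEdgeSet_adj]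
  constructor
  · rintro ⟨⟨e, he, hFe⟩, hne⟩
    induction e using Sym2.ind with
    | _ a b =>
      have hadj : G.Adj a b := he
      dsimp only at hFe
      by_cases hc : y ∈ s(a,b) ∧ x ∉ s(a,b) ∧ shiftMap x y s(a,b) ∉ G.edgeSet
      · rw [if_pos hc] at hFe
        obtain ⟨hy, hx, hsh⟩ := hc
        rw [Sym2.mem_iff] at hy hx
        push_neg at hx
        right
        rcases hy with rfl | rfl
        · have hb : ¬ b = y := (G.ne_of_adj hadj).symm
          rw [shiftMap, Sym2.map_pair_eq, if_pos rfl, if_neg hb] at hFe hsh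
          have hnbx : ¬ G.Adj b x := fun h => hsh (G.mem_edgeSet.2 h.symm)
          have hmb : mv G x y b := ⟨Ne.symm hx.2, hadj.symm, hnbx⟩
          rw [Sym2.eq_iff] at hFe
          rcases hFe with ⟨rfl, rfl⟩ | ⟨rfl, rfl⟩
          · exact Or.inl ⟨rfl, hmb⟩
          · exact Or.inr ⟨rfl, hmb⟩
        · have ha : ¬ a = y := G.ne_of_adj hadj
          rw [shiftMap, Sym2.map_pair_eq, if_pos rfl, if_neg ha] at hFe hsh
          have hnax : ¬ G.Adj a x := fun h => hsh (G.mem_edgeSet.2 h)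
          have hma : mv G x y a := ⟨Ne.symm hx.1, hadj, hnax⟩
          rw [Sym2.eq_iff] at hFe
          rcases hFe with ⟨rfl, rfl⟩ | ⟨rfl, rfl⟩
          · exact Or.inr ⟨rfl, hma⟩
          · exact Or.inl ⟨rfl, hma⟩
      · rw [if_neg hc] at hFe
        rw [Sym2.eq_iff] at hFe
        have hadjuv : G.Adj u v := by
          rcases hFe with ⟨rfl, rfl⟩ | ⟨rfl, rfl⟩
          · exact hadj
          · exact hadj.symm
        left
        refine ⟨hadjuv, ?_⟩
        rintro (⟨huy, hmvv⟩ | ⟨hvy, hmvu⟩)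
        · obtain rfl := huy.symm
          apply hc
          have hsab : s(a,b) = s(y,v) := by
            rcases hFe with ⟨rfl, rfl⟩ | ⟨rfl, rfl⟩
            · rfl
            · exact Sym2.eq_swap
          have hxy : x ≠ y := mv_ne G hmvv
          rw [hsab]
          refine ⟨Sym2.mem_mk_left _ _, ?_, ?_⟩
          · rw [Sym2.mem_iff]; push_neg
            exact ⟨hxy, fun h => hmvv.1 h.symm⟩
          · rw [shiftMap, Sym2.map_pair_eq, if_pos rfl,
              if_neg (G.ne_of_adj hmvv.2.1)]
            rw [SimpleGraph.mem_edgeSet]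
            exact fun h => hmvv.2.2 h.symm
        · obtain rfl := hvy.symm
          apply hc
          have hsab : s(a,b) = s(u,y) := by
            rcases hFe with ⟨rfl, rfl⟩ | ⟨rfl, rfl⟩
            · rfl
            · exact Sym2.eq_swap
          have hxy : x ≠ y := mv_ne G hmvu
          rw [hsab]
          refine ⟨Sym2.mem_mk_right _ _, ?_, ?_⟩
          · rw [Sym2.mem_iff]; push_neg
            exact ⟨fun h => hmvu.1 h.symm, hxy⟩
          · rw [shiftMap, Sym2.map_pair_eq, if_neg (G.ne_of_adj hmvu.2.1),
              if_pos rfl]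
            rw [SimpleGraph.mem_edgeSet]
            exact fun h => hmvu.2.2 h
  · rintro (⟨hadj, hnmo⟩ | (⟨hu, hmv⟩ | ⟨hv, hmv⟩))
    · refine ⟨⟨s(u,v), hadj, ?_⟩, G.ne_of_adj hadj⟩
      dsimp only
      rw [if_neg]
      rintro ⟨hy, hx, hsh⟩
      rw [Sym2.mem_iff] at hy hx
      push_neg at hx
      apply hnmo
      rcases hy with hy | hy
      · obtain rfl := hy.symm
        refine Or.inl ⟨rfl, Ne.symm hx.2, hadj.symm, ?_⟩
        rw [shiftMap, Sym2.map_pair_eq, if_pos rfl,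
          if_neg (G.ne_of_adj hadj).symm] at hsh
        rw [SimpleGraph.mem_edgeSet] at hsh
        exact fun h => hsh h.symm
      · obtain rfl := hy.symm
        refine Or.inr ⟨rfl, Ne.symm hx.1, hadj, ?_⟩
        rw [shiftMap, Sym2.map_pair_eq, if_neg (G.ne_of_adj hadj),
          if_pos rfl] at hsh
        rw [SimpleGraph.mem_edgeSet] at hsh
        exact fun h => hsh h
    · obtain rfl := hu.symm
      have hxy : x ≠ y := mv_ne G hmv
      refine ⟨⟨s(v,y), hmv.2.1, ?_⟩, fun h => hmv.1 h.symm⟩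
      dsimp only
      rw [if_pos, shiftMap, Sym2.map_pair_eq,
        if_neg (G.ne_of_adj hmv.2.1), if_pos rfl]
      · exact Sym2.eq_swap
      · refine ⟨Sym2.mem_mk_right _ _, ?_, ?_⟩
        · rw [Sym2.mem_iff]; push_neg
          exact ⟨fun h => hmv.1 h.symm, hxy⟩
        · rw [shiftMap, Sym2.map_pair_eq, if_neg (G.ne_of_adj hmv.2.1), if_pos rfl,
            SimpleGraph.mem_edgeSet]
          exact hmv.2.2
    · obtain rfl := hv.symm
      have hxy : x ≠ y := mv_ne G hmv
      refine ⟨⟨s(u,y), hmv.2.1, ?_⟩, fun h => hmv.1 h⟩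
      dsimp only
      rw [if_pos, shiftMap, Sym2.map_pair_eq,
        if_neg (G.ne_of_adj hmv.2.1), if_pos rfl]
      · refine ⟨Sym2.mem_mk_right _ _, ?_, ?_⟩
        · rw [Sym2.mem_iff]; push_neg
          exact ⟨fun h => hmv.1 h.symm, hxy⟩
        · rw [shiftMap, Sym2.map_pair_eq, if_neg (G.ne_of_adj hmv.2.1), if_pos rfl,
            SimpleGraph.mem_edgeSet]
          exact hmv.2.2

lemma shiftGraph_eq_self (hM : ∀ v, ¬ mv G x y v) : shiftGraph G x y = G := by
  ext u v
  rw [shiftGraph_adj]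
  have h1 := hM u; have h2 := hM v
  tauto

lemma P1 (hxy : x ≠ y) (v : V) : (shiftGraph G x y).Adj y v ↔ (G.Adj y v ∧ ¬ mv G x y v) := by
  rw [shiftGraph_adj]
  have h1 := mv_not_x G x y
  have h2 := mv_not_y G x y
  have h3 : mv G x y v → G.Adj y v := fun h => h.2.1.symm
  have h4 : y ≠ x := hxy.symm
  tauto

lemma P2 (hxy : x ≠ y) (v : V) : (shiftGraph G x y).Adj x v ↔ (G.Adj x v ∨ mv G x y v) := by
  rw [shiftGraph_adj]
  have h1 := mv_not_x G x y
  have h2 := mv_not_y G x y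
  have h5 : mv G x y v → ¬ G.Adj x v := fun h ha => h.2.2 ha.symm
  tauto

lemma P3 {u v : V} (hu1 : u ≠ x) (hu2 : u ≠ y) (hv1 : v ≠ x) (hv2 : v ≠ y) :
    ((shiftGraph G x y).Adj u v ↔ G.Adj u v) := by
  rw [shiftGraph_adj]; tauto

variable (hxy : x ≠ y) (hA : ∀ v, G.Adj v x → v = y ∨ G.Adj v y)

include hxy hA in
lemma case_xw {w : V} (hw1 : w ≠ x) (hw2 : w ≠ y) :
    G.Adj y w ↔ (shiftGraph G x y).Adj x w := by
  rw [shiftGraph_adj]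
  have hAw := hA w
  have hc1 : G.Adj x w ↔ G.Adj w x := G.adj_comm x w
  have hc2 : G.Adj y w ↔ G.Adj w y := G.adj_comm y w
  unfold mv
  have hmx : ¬ (x ≠ x) := fun h => h rfl
  tauto

include hxy hA in
lemma case_yw {w : V} (hw1 : w ≠ x) (hw2 : w ≠ y) :
    G.Adj x w ↔ (shiftGraph G x y).Adj y w := by
  rw [shiftGraph_adj]
  have hAw := hA w
  have hc1 : G.Adj x w ↔ G.Adj w x := G.adj_comm x w
  have hc2 : G.Adj y w ↔ G.Adj w y := G.adj_comm y w
  have hyy : ¬ G.Adj y y := G.irrefl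
  unfold mv
  tauto

include hxy in
lemma case_xy : G.Adj y x ↔ (shiftGraph G x y).Adj x y := by
  rw [shiftGraph_adj]
  have hc : G.Adj x y ↔ G.Adj y x := G.adj_comm x y
  have hyy : ¬ G.Adj y y := G.irrefl
  unfold mv
  tauto

lemma case_ww {w w' : V} (hw1 : w ≠ x) (hw2 : w ≠ y) (hw1' : w' ≠ x) (hw2' : w' ≠ y) :
    G.Adj w w' ↔ (shiftGraph G x y).Adj w w' := (P3 G x y hw1 hw2 hw1' hw2').symm

include hxy hA in
lemma swap_iso_forward :
    ∀ u v, G.Adj (Equiv.swap x y u) (Equiv.swap x y v) ↔ (shiftGraph G x y).Adj u v := by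
  have symmRHS : ∀ u v, (shiftGraph G x y).Adj u v ↔ (shiftGraph G x y).Adj v u := by
    intro u v; constructor <;> intro h <;> exact h.symm
  have symmL : ∀ (a b : V), G.Adj a b ↔ G.Adj b a := fun a b => G.adj_comm a b
  intro u v
  rcases eq_or_ne u x with h | hux
  · subst h
    rcases eq_or_ne v y with h | hvy
    · subst h
      rw [Equiv.swap_apply_left, Equiv.swap_apply_right]
      exact case_xy G _ _ hxy
    · rcases eq_or_ne v u with h | hvx
      · subst h
        simp [SimpleGraph.irrefl]
      · rw [Equiv.swap_apply_left, Equiv.swap_apply_of_ne_of_ne hvx hvy]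
        exact case_xw G _ _ hxy hA hvx hvy
  · rcases eq_or_ne u y with h | huy
    · subst h
      rcases eq_or_ne v x with h | hvx
      · subst h
        rw [Equiv.swap_apply_right, Equiv.swap_apply_left]
        rw [symmL, symmRHS]
        exact case_xy G _ _ hxy
      · rcases eq_or_ne v u with h | hvy
        · subst h; simp [SimpleGraph.irrefl]
        · rw [Equiv.swap_apply_right, Equiv.swap_apply_of_ne_of_ne hvx hvy]
          exact case_yw G _ _ hxy hA hvx hvy
    · rcases eq_or_ne v x with h | hvx
      · subst h
        rw [Equiv.swap_apply_left, Equiv.swap_apply_of_ne_of_ne hux huy]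
        rw [symmL, symmRHS]
        exact case_xw G _ _ hxy hA hux huy
      · rcases eq_or_ne v y with h | hvy
        · subst h
          rw [Equiv.swap_apply_right, Equiv.swap_apply_of_ne_of_ne hux huy]
          rw [symmL, symmRHS]
          exact case_yw G _ _ hxy hA hux huy
        · rw [Equiv.swap_apply_of_ne_of_ne hux huy, Equiv.swap_apply_of_ne_of_ne hvx hvy]
          exact (P3 G x y hux huy hvx hvy).symm
end Comb
end Stmt7A

namespace Stmt7A
open Module.End Finset
variable {n : ℕ}

/-! ### adjacency matrices -/

noncomputable def Amat (G : SimpleGraph (Fin n)) : Matrix (Fin n) (Fin n) ℝ :=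
  @SimpleGraph.adjMatrix ℝ (Fin n) G (Classical.decRel _) _ _

lemma Amat_apply (G : SimpleGraph (Fin n)) (i j : Fin n) : Amat G i j = ind (G.Adj i j) := by
  by_cases h : G.Adj i j
  · rw [Amat, SimpleGraph.adjMatrix_apply, if_pos h, ind_pos h]
  · rw [Amat, SimpleGraph.adjMatrix_apply, if_neg h, ind_neg h]

lemma Amat_nonneg (G : SimpleGraph (Fin n)) (i j : Fin n) : 0 ≤ Amat G i j := by
  rw [Amat_apply]; exact ind_nonneg _

lemma Amat_symm (G : SimpleGraph (Fin n)) (i j : Fin n) : Amat G i j = Amat G j i := by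
  rw [Amat_apply, Amat_apply]
  by_cases h : G.Adj i j
  · rw [ind_pos h, ind_pos h.symm]
  · rw [ind_neg h, ind_neg (fun h' => h h'.symm)]

lemma Amat_isHermitian (G : SimpleGraph (Fin n)) : (Amat G).IsHermitian := by
  apply Matrix.ext
  intro i j
  rw [Matrix.conjTranspose_apply, star_trivial, Amat_symm]

/-! ### quadratic forms -/

noncomputable def qf (A : Matrix (Fin n) (Fin n) ℝ) (f : Fin n → ℝ) : ℝ :=
  ∑ i, (∑ j, A i j * f j) * f i

lemma indsum (p : Fin n → Prop) [DecidablePred p] (f : Fin n → ℝ) :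
    ∑ j, ind (p j) * f j = ∑ v ∈ Finset.univ.filter p, f v := by
  rw [Finset.sum_filter]
  apply Finset.sum_congr rfl
  intro j _
  by_cases hp : p j
  · rw [ind_pos hp, if_pos hp, one_mul]
  · rw [ind_neg hp, if_neg hp, zero_mul]

lemma helper1 (s : Fin n) (p : Fin n → Prop) [DecidablePred p] (f : Fin n → ℝ) :
    ∑ i, (∑ j, ind (i = s ∧ p j) * f j) * f i
      = f s * ∑ v ∈ Finset.univ.filter p, f v := by
  rw [Finset.sum_eq_single_of_mem s (Finset.mem_univ s)]
  · have hcong : (∑ j, ind (s = s ∧ p j) * f j) = ∑ j, ind (p j) * f j :=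
      Finset.sum_congr rfl (fun j _ => by
        by_cases hp : p j
        · rw [ind_pos ⟨rfl, hp⟩, ind_pos hp]
        · rw [ind_neg (fun h => hp h.2), ind_neg hp])
    rw [hcong, indsum p f]; ring
  · intro i _ his
    have : ∀ j, ind (i = s ∧ p j) * f j = 0 := by
      intro j; rw [ind_neg (fun h => his h.1)]; ring
    simp [this]

lemma helper2 (s : Fin n) (p : Fin n → Prop) [DecidablePred p] (f : Fin n → ℝ) :
    ∑ i, (∑ j, ind (j = s ∧ p i) * f j) * f i
      = f s * ∑ v ∈ Finset.univ.filter p, f v := by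
  have hinner : ∀ i, (∑ j, ind (j = s ∧ p i) * f j) = ind (p i) * f s := by
    intro i
    by_cases hp : p i
    · rw [ind_pos hp, one_mul]
      rw [Finset.sum_eq_single_of_mem s (Finset.mem_univ s)]
      · rw [ind_pos ⟨rfl, hp⟩, one_mul]
      · intro j _ hjs; rw [ind_neg (fun h => hjs h.1)]; ring
    · rw [ind_neg hp, zero_mul]
      apply Finset.sum_eq_zero
      intro j _
      rw [ind_neg (fun h => hp h.2)]; ring
  simp only [hinner]
  have : ∀ i, (ind (p i) * f s) * f i = f s * (ind (p i) * f i) := by intro i; ring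
  simp only [this]
  rw [← Finset.mul_sum, indsum p f]

lemma qf_diff (A B : Matrix (Fin n) (Fin n) ℝ) (p : Fin n → Prop) [DecidablePred p]
    (s t : Fin n)
    (hB : ∀ u v, B u v = A u v + (ind (u = s ∧ p v) + ind (v = s ∧ p u)
        - ind (u = t ∧ p v) - ind (v = t ∧ p u)))
    (f : Fin n → ℝ) :
    qf B f = qf A f + 2 * (f s - f t) * ∑ v ∈ Finset.univ.filter p, f v := by
  unfold qf
  have expand : ∀ i, (∑ j, B i j * f j) * f i
      = (∑ j, A i j * f j) * f i
        + (∑ j, ind (i = s ∧ p j) * f j) * f i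
        + (∑ j, ind (j = s ∧ p i) * f j) * f i
        - (∑ j, ind (i = t ∧ p j) * f j) * f i
        - (∑ j, ind (j = t ∧ p i) * f j) * f i := by
    intro i
    have : ∑ j, B i j * f j = (∑ j, A i j * f j)
        + (∑ j, ind (i = s ∧ p j) * f j)
        + (∑ j, ind (j = s ∧ p i) * f j)
        - (∑ j, ind (i = t ∧ p j) * f j)
        - (∑ j, ind (j = t ∧ p i) * f j) := by
      rw [← Finset.sum_add_distrib, ← Finset.sum_add_distrib, ← Finset.sum_sub_distrib,
        ← Finset.sum_sub_distrib]
      apply Finset.sum_congr rfl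
      intro j _
      rw [hB i j]; ring
    rw [this]; ring
  simp only [expand]
  rw [Finset.sum_sub_distrib, Finset.sum_sub_distrib, Finset.sum_add_distrib,
    Finset.sum_add_distrib, helper1, helper2, helper1, helper2]
  ring

lemma qf_reindex (A : Matrix (Fin n) (Fin n) ℝ) (σ : Equiv.Perm (Fin n)) (hσ : ∀ i, σ (σ i) = i)
    (f : Fin n → ℝ) :
    qf A (fun i => f (σ i)) = qf (Matrix.of fun u v => A (σ u) (σ v)) f := by
  unfold qf
  rw [← Equiv.sum_comp σ (fun i => (∑ j, A i j * f (σ j)) * f (σ i))]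
  apply Finset.sum_congr rfl
  intro i _
  rw [hσ i]
  congr 1
  rw [← Equiv.sum_comp σ (fun j => A (σ i) j * f (σ j))]
  apply Finset.sum_congr rfl
  intro j _
  rw [hσ j]
  rfl

section Leaves
variable (G : SimpleGraph (Fin n)) (x y : Fin n) (hxy : x ≠ y)

def stmtI (u v : Fin n) : Prop :=
  Amat (shiftGraph G x y) u v = Amat G u v
    + (ind (u = x ∧ mv G x y v) + ind (v = x ∧ mv G x y u)
      - ind (u = y ∧ mv G x y v) - ind (v = y ∧ mv G x y u))

def stmtII (u v : Fin n) : Prop :=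
  Amat (shiftGraph G x y) (Equiv.swap x y u) (Equiv.swap x y v) = Amat G u v
    + (ind (u = y ∧ mv G y x v) + ind (v = y ∧ mv G y x u)
      - ind (u = x ∧ mv G y x v) - ind (v = x ∧ mv G y x u))

lemma flipI {u v : Fin n} (h : stmtI G x y u v) : stmtI G x y v u := by
  unfold stmtI at h ⊢
  rw [Amat_symm, Amat_symm G, h]; ring

lemma flipII {u v : Fin n} (h : stmtII G x y u v) : stmtII G x y v u := by
  unfold stmtII at h ⊢
  rw [Amat_symm, Amat_symm G, h]; ring

include hxy

lemma leafI_xx : stmtI G x y x x := by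
  unfold stmtI
  have e0 : Amat (shiftGraph G x y) x x = 0 := by
    rw [Amat_apply]; exact ind_neg ((shiftGraph G x y).irrefl)
  have e1 : Amat G x x = 0 := by rw [Amat_apply]; exact ind_neg (G.irrefl)
  have e2 : ind (x = x ∧ mv G x y x) = 0 := ind_neg (fun h => mv_not_x G x y h.2)
  have e3 : ind (x = y ∧ mv G x y x) = 0 := ind_neg (fun h => mv_not_x G x y h.2)
  rw [e0, e1, e2, e3]; ring

lemma leafI_yy : stmtI G x y y y := by
  unfold stmtI
  have e0 : Amat (shiftGraph G x y) y y = 0 := by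
    rw [Amat_apply]; exact ind_neg ((shiftGraph G x y).irrefl)
  have e1 : Amat G y y = 0 := by rw [Amat_apply]; exact ind_neg (G.irrefl)
  have e2 : ind (y = x ∧ mv G x y y) = 0 := ind_neg (fun h => mv_not_y G x y h.2)
  have e3 : ind (y = y ∧ mv G x y y) = 0 := ind_neg (fun h => mv_not_y G x y h.2)
  rw [e0, e1, e2, e3]; ring

lemma leafI_xy : stmtI G x y x y := by
  unfold stmtI
  have e1 : ind (x = x ∧ mv G x y y) = 0 := ind_neg (fun h => mv_not_y G x y h.2)
  have e2 : ind (y = x ∧ mv G x y x) = 0 := ind_neg (fun h => mv_not_x G x y h.2)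
  have e3 : ind (x = y ∧ mv G x y y) = 0 := ind_neg (fun h => hxy h.1)
  have e4 : ind (y = y ∧ mv G x y x) = 0 := ind_neg (fun h => mv_not_x G x y h.2)
  have h2 := P2 G x y hxy y
  have e0 : Amat (shiftGraph G x y) x y = Amat G x y := by
    rw [Amat_apply, Amat_apply]
    by_cases h : G.Adj x y
    · rw [ind_pos h, ind_pos (h2.mpr (Or.inl h))]
    · rw [ind_neg h, ind_neg (fun h' => by
        rcases h2.mp h' with h'' | h''
        · exact h h''
        · exact mv_not_y G x y h'')]
  rw [e0, e1, e2, e3, e4]; ring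

lemma leafI_xw {w : Fin n} (hw1 : w ≠ x) (hw2 : w ≠ y) : stmtI G x y x w := by
  unfold stmtI
  have e2 : ind (w = x ∧ mv G x y x) = 0 := ind_neg (fun h => hw1 h.1)
  have e3 : ind (x = y ∧ mv G x y w) = 0 := ind_neg (fun h => hxy h.1)
  have e4 : ind (w = y ∧ mv G x y x) = 0 := ind_neg (fun h => hw2 h.1)
  have h2 := P2 G x y hxy w
  rw [e2, e3, e4, Amat_apply, Amat_apply]
  by_cases hm : mv G x y w
  · have e1 : ind (x = x ∧ mv G x y w) = 1 := ind_pos ⟨rfl, hm⟩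
    rw [e1, ind_neg (fun h : G.Adj x w => hm.2.2 h.symm), ind_pos (h2.mpr (Or.inr hm))]
    ring
  · have e1 : ind (x = x ∧ mv G x y w) = 0 := ind_neg (fun h => hm h.2)
    rw [e1]
    by_cases ha : G.Adj x w
    · rw [ind_pos ha, ind_pos (h2.mpr (Or.inl ha))]; ring
    · rw [ind_neg ha, ind_neg (fun h' => by
        rcases h2.mp h' with h'' | h''
        · exact ha h''
        · exact hm h'')]
      ring

lemma leafI_yw {w : Fin n} (hw1 : w ≠ x) (hw2 : w ≠ y) : stmtI G x y y w := by
  unfold stmtI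
  have e1 : ind (y = x ∧ mv G x y w) = 0 := ind_neg (fun h => hxy h.1.symm)
  have e2 : ind (w = x ∧ mv G x y y) = 0 := ind_neg (fun h => hw1 h.1)
  have e4 : ind (w = y ∧ mv G x y y) = 0 := ind_neg (fun h => hw2 h.1)
  have h1 := P1 G x y hxy w
  rw [e1, e2, e4, Amat_apply, Amat_apply]
  by_cases hm : mv G x y w
  · have e3 : ind (y = y ∧ mv G x y w) = 1 := ind_pos ⟨rfl, hm⟩
    rw [e3, ind_pos hm.2.1.symm, ind_neg (fun h' => (h1.mp h').2 hm)]
    ring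
  · have e3 : ind (y = y ∧ mv G x y w) = 0 := ind_neg (fun h => hm h.2)
    rw [e3]
    by_cases ha : G.Adj y w
    · rw [ind_pos ha, ind_pos (h1.mpr ⟨ha, hm⟩)]; ring
    · rw [ind_neg ha, ind_neg (fun h' => ha (h1.mp h').1)]; ring

omit hxy in
lemma leafI_ww {w w' : Fin n} (hw1 : w ≠ x) (hw2 : w ≠ y) (hw1' : w' ≠ x) (hw2' : w' ≠ y) :
    stmtI G x y w w' := by
  unfold stmtI
  have e1 : ind (w = x ∧ mv G x y w') = 0 := ind_neg (fun h => hw1 h.1)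
  have e2 : ind (w' = x ∧ mv G x y w) = 0 := ind_neg (fun h => hw1' h.1)
  have e3 : ind (w = y ∧ mv G x y w') = 0 := ind_neg (fun h => hw2 h.1)
  have e4 : ind (w' = y ∧ mv G x y w) = 0 := ind_neg (fun h => hw2' h.1)
  have h3 := P3 G x y hw1 hw2 hw1' hw2'
  rw [e1, e2, e3, e4, Amat_apply, Amat_apply]
  by_cases ha : G.Adj w w'
  · rw [ind_pos ha, ind_pos (h3.mpr ha)]; ring
  · rw [ind_neg ha, ind_neg (fun h' => ha (h3.mp h'))]; ring

lemma hBi (u v : Fin n) : stmtI G x y u v := by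
  rcases eq_or_ne u x with h | hux
  · subst h
    rcases eq_or_ne v y with h | hvy
    · subst h; exact leafI_xy G _ _ hxy
    · rcases eq_or_ne v u with h | hvx
      · subst h; exact leafI_xx G _ _ hxy
      · exact leafI_xw G _ _ hxy hvx hvy
  · rcases eq_or_ne u y with h | huy
    · subst h
      rcases eq_or_ne v x with h | hvx
      · subst h; exact flipI G _ _ (leafI_xy G _ _ hxy)
      · rcases eq_or_ne v u with h | hvy
        · subst h; exact leafI_yy G _ _ hxy
        · exact leafI_yw G _ _ hxy hvx hvy
    · rcases eq_or_ne v x with h | hvx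
      · subst h; exact flipI G _ _ (leafI_xw G _ _ hxy hux huy)
      · rcases eq_or_ne v y with h | hvy
        · subst h; exact flipI G _ _ (leafI_yw G _ _ hxy hux huy)
        · exact leafI_ww G _ _ hux huy hvx hvy

lemma leafII_xx : stmtII G x y x x := by
  unfold stmtII
  rw [Equiv.swap_apply_left]
  have e0 : Amat (shiftGraph G x y) y y = 0 := by
    rw [Amat_apply]; exact ind_neg ((shiftGraph G x y).irrefl)
  have e1 : Amat G x x = 0 := by rw [Amat_apply]; exact ind_neg (G.irrefl)
  have e2 : ind (x = y ∧ mv G y x x) = 0 := ind_neg (fun h => hxy h.1)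
  have e3 : ind (x = x ∧ mv G y x x) = 0 := ind_neg (fun h => mv_not_y G y x h.2)
  rw [e0, e1, e2, e3]; ring

lemma leafII_yy : stmtII G x y y y := by
  unfold stmtII
  rw [Equiv.swap_apply_right]
  have e0 : Amat (shiftGraph G x y) x x = 0 := by
    rw [Amat_apply]; exact ind_neg ((shiftGraph G x y).irrefl)
  have e1 : Amat G y y = 0 := by rw [Amat_apply]; exact ind_neg (G.irrefl)
  have e2 : ind (y = y ∧ mv G y x y) = 0 := ind_neg (fun h => mv_not_x G y x h.2)
  have e3 : ind (y = x ∧ mv G y x y) = 0 := ind_neg (fun h => mv_not_x G y x h.2)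
  rw [e0, e1, e2, e3]; ring

lemma leafII_xy : stmtII G x y x y := by
  unfold stmtII
  rw [Equiv.swap_apply_left, Equiv.swap_apply_right]
  have h2 := P2 G x y hxy y
  have e0 : Amat (shiftGraph G x y) y x = Amat G x y := by
    rw [Amat_symm, Amat_apply, Amat_apply]
    by_cases h : G.Adj x y
    · rw [ind_pos h, ind_pos (h2.mpr (Or.inl h))]
    · rw [ind_neg h, ind_neg (fun h' => by
        rcases h2.mp h' with h'' | h''
        · exact h h''
        · exact mv_not_y G x y h'')]
  have e1 : ind (x = y ∧ mv G y x y) = 0 := ind_neg (fun h => hxy h.1)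
  have e2 : ind (y = y ∧ mv G y x x) = 0 := ind_neg (fun h => mv_not_y G y x h.2)
  have e3 : ind (x = x ∧ mv G y x y) = 0 := ind_neg (fun h => mv_not_x G y x h.2)
  have e4 : ind (y = x ∧ mv G y x x) = 0 := ind_neg (fun h => hxy h.1.symm)
  rw [e0, e1, e2, e3, e4]; ring

lemma leafII_xw {w : Fin n} (hw1 : w ≠ x) (hw2 : w ≠ y) : stmtII G x y x w := by
  unfold stmtII
  rw [Equiv.swap_apply_left, Equiv.swap_apply_of_ne_of_ne hw1 hw2]
  have e1 : ind (x = y ∧ mv G y x w) = 0 := ind_neg (fun h => hxy h.1)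
  have e2 : ind (w = y ∧ mv G y x x) = 0 := ind_neg (fun h => hw2 h.1)
  have e4 : ind (w = x ∧ mv G y x x) = 0 := ind_neg (fun h => hw1 h.1)
  have h1 := P1 G x y hxy w
  rw [e1, e2, e4, Amat_apply, Amat_apply]
  by_cases ha : G.Adj w x
  · by_cases hb : G.Adj w y
    · have e3 : ind (x = x ∧ mv G y x w) = 0 := ind_neg (fun h => h.2.2.2 hb)
      rw [e3, ind_pos ha.symm,
        ind_pos (h1.mpr ⟨hb.symm, fun hm => hm.2.2 ha⟩)]
      ring
    · have e3 : ind (x = x ∧ mv G y x w) = 1 := ind_pos ⟨rfl, hw2, ha, hb⟩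
      rw [e3, ind_pos ha.symm, ind_neg (fun h' => hb (h1.mp h').1.symm)]
      ring
  · have e3 : ind (x = x ∧ mv G y x w) = 0 := ind_neg (fun h => ha h.2.2.1)
    rw [e3, ind_neg (fun h : G.Adj x w => ha h.symm)]
    by_cases hb : G.Adj w y
    · rw [ind_neg (fun h' => (h1.mp h').2 ⟨hw1, hb, ha⟩)]; ring
    · rw [ind_neg (fun h' => hb (h1.mp h').1.symm)]; ring

lemma leafII_yw {w : Fin n} (hw1 : w ≠ x) (hw2 : w ≠ y) : stmtII G x y y w := by
  unfold stmtII
  rw [Equiv.swap_apply_right, Equiv.swap_apply_of_ne_of_ne hw1 hw2]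
  have e2 : ind (w = y ∧ mv G y x y) = 0 := ind_neg (fun h => hw2 h.1)
  have e3 : ind (y = x ∧ mv G y x w) = 0 := ind_neg (fun h => hxy h.1.symm)
  have e4 : ind (w = x ∧ mv G y x y) = 0 := ind_neg (fun h => hw1 h.1)
  have h2 := P2 G x y hxy w
  rw [e2, e3, e4, Amat_apply, Amat_apply]
  by_cases hb : G.Adj w y
  · have e1 : ind (y = y ∧ mv G y x w) = 0 := ind_neg (fun h => h.2.2.2 hb)
    rw [e1, ind_pos hb.symm]
    by_cases ha : G.Adj w x
    · rw [ind_pos (h2.mpr (Or.inl ha.symm))]; ring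
    · rw [ind_pos (h2.mpr (Or.inr ⟨hw1, hb, ha⟩))]; ring
  · by_cases ha : G.Adj w x
    · have e1 : ind (y = y ∧ mv G y x w) = 1 := ind_pos ⟨rfl, hw2, ha, hb⟩
      rw [e1, ind_neg (fun h : G.Adj y w => hb h.symm),
        ind_pos (h2.mpr (Or.inl ha.symm))]
      ring
    · have e1 : ind (y = y ∧ mv G y x w) = 0 := ind_neg (fun h => ha h.2.2.1)
      rw [e1, ind_neg (fun h : G.Adj y w => hb h.symm),
        ind_neg (fun h' => by
          rcases h2.mp h' with h'' | h''
          · exact ha h''.symm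
          · exact hb h''.2.1)]
      ring

omit hxy in
lemma leafII_ww {w w' : Fin n} (hw1 : w ≠ x) (hw2 : w ≠ y) (hw1' : w' ≠ x) (hw2' : w' ≠ y) :
    stmtII G x y w w' := by
  unfold stmtII
  rw [Equiv.swap_apply_of_ne_of_ne hw1 hw2, Equiv.swap_apply_of_ne_of_ne hw1' hw2']
  have e1 : ind (w = y ∧ mv G y x w') = 0 := ind_neg (fun h => hw2 h.1)
  have e2 : ind (w' = y ∧ mv G y x w) = 0 := ind_neg (fun h => hw2' h.1)
  have e3 : ind (w = x ∧ mv G y x w') = 0 := ind_neg (fun h => hw1 h.1)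
  have e4 : ind (w' = x ∧ mv G y x w) = 0 := ind_neg (fun h => hw1' h.1)
  have h3 := P3 G x y hw1 hw2 hw1' hw2'
  rw [e1, e2, e3, e4, Amat_apply, Amat_apply]
  by_cases ha : G.Adj w w'
  · rw [ind_pos ha, ind_pos (h3.mpr ha)]; ring
  · rw [ind_neg ha, ind_neg (fun h' => ha (h3.mp h'))]; ring

lemma hBii (u v : Fin n) : stmtII G x y u v := by
  rcases eq_or_ne u x with h | hux
  · subst h
    rcases eq_or_ne v y with h | hvy
    · subst h; exact leafII_xy G _ _ hxy
    · rcases eq_or_ne v u with h | hvx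
      · subst h; exact leafII_xx G _ _ hxy
      · exact leafII_xw G _ _ hxy hvx hvy
  · rcases eq_or_ne u y with h | huy
    · subst h
      rcases eq_or_ne v x with h | hvx
      · subst h; exact flipII G _ _ (leafII_xy G _ _ hxy)
      · rcases eq_or_ne v u with h | hvy
        · subst h; exact leafII_yy G _ _ hxy
        · exact leafII_yw G _ _ hxy hvx hvy
    · rcases eq_or_ne v x with h | hvx
      · subst h; exact flipII G _ _ (leafII_xw G _ _ hxy hux huy)
      · rcases eq_or_ne v y with h | hvy
        · subst h; exact flipII G _ _ (leafII_yw G _ _ hxy hux huy)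
        · exact leafII_ww G _ _ hux huy hvx hvy
end Leaves
end Stmt7A

namespace Stmt7A
open Module.End Finset
variable {n : ℕ}

/-! ### spectral theory -/

noncomputable def TE (A : Matrix (Fin n) (Fin n) ℝ) :
    EuclideanSpace ℝ (Fin n) →ₗ[ℝ] EuclideanSpace ℝ (Fin n) := Matrix.toEuclideanLin A

noncomputable def cE (g : Fin n → ℝ) : EuclideanSpace ℝ (Fin n) :=
  (WithLp.equiv 2 (Fin n → ℝ)).symm g

lemma cE_apply (g : Fin n → ℝ) (i : Fin n) : cE g i = g i := rfl

lemma cE_ne_zero {g : Fin n → ℝ} (hg : g ≠ 0) : cE g ≠ 0 := fun h => hg (by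
  funext i; have := congrArg (fun v : EuclideanSpace ℝ (Fin n) => v i) h; simpa [cE_apply] using this)

lemma TE_apply (A : Matrix (Fin n) (Fin n) ℝ) (v : EuclideanSpace ℝ (Fin n)) (i : Fin n) :
    TE A v i = ∑ j, A i j * v j := by
  rw [TE, Matrix.toEuclideanLin_apply]
  rfl

lemma inner_TE (A : Matrix (Fin n) (Fin n) ℝ) (v : EuclideanSpace ℝ (Fin n)) :
    (inner ℝ (TE A v) v : ℝ) = ∑ i, (∑ j, A i j * v j) * v i := by
  rw [PiLp.inner_apply]
  apply Finset.sum_congr rfl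
  intro i _
  rw [TE_apply]
  simp [mul_comm]

lemma inner_TE_qf (A : Matrix (Fin n) (Fin n) ℝ) (g : Fin n → ℝ) :
    (inner ℝ (TE A (cE g)) (cE g) : ℝ) = qf A g := by
  rw [inner_TE]; rfl

lemma norm_sq_eq (v : EuclideanSpace ℝ (Fin n)) : ‖v‖ ^ 2 = ∑ i, v i * v i := by
  rw [← real_inner_self_eq_norm_sq, PiLp.inner_apply]
  simp
  simp only [sq]

noncomputable def supR (A : Matrix (Fin n) (Fin n) ℝ) : ℝ :=
  ⨆ x : {x : EuclideanSpace ℝ (Fin n) // x ≠ 0},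
    (inner ℝ (TE A x) (x : EuclideanSpace ℝ (Fin n)) : ℝ) / ‖(x : EuclideanSpace ℝ (Fin n))‖ ^ 2

lemma bddA (A : Matrix (Fin n) (Fin n) ℝ) :
    BddAbove (Set.range fun x : {x : EuclideanSpace ℝ (Fin n) // x ≠ 0} =>
      (inner ℝ (TE A x) (x : EuclideanSpace ℝ (Fin n)) : ℝ) / ‖(x : EuclideanSpace ℝ (Fin n))‖ ^ 2) := by
  refine ⟨‖LinearMap.toContinuousLinearMap (TE A)‖, ?_⟩
  rintro r ⟨⟨v, hv⟩, rfl⟩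
  have h1 : (inner ℝ (TE A v) v : ℝ) ≤ ‖TE A v‖ * ‖v‖ := real_inner_le_norm _ _
  have h2 : ‖TE A v‖ ≤ ‖LinearMap.toContinuousLinearMap (TE A)‖ * ‖v‖ :=
    (LinearMap.toContinuousLinearMap (TE A)).le_opNorm v
  have hv0 : 0 < ‖v‖ := norm_pos_iff.mpr hv
  rw [div_le_iff₀ (by positivity)]
  calc (inner ℝ (TE A v) v : ℝ) ≤ ‖TE A v‖ * ‖v‖ := h1
    _ ≤ (‖LinearMap.toContinuousLinearMap (TE A)‖ * ‖v‖) * ‖v‖ := by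
        apply mul_le_mul_of_nonneg_right h2 hv0.le
    _ = ‖LinearMap.toContinuousLinearMap (TE A)‖ * ‖v‖ ^ 2 := by ring

lemma rayleigh_le_supR (A : Matrix (Fin n) (Fin n) ℝ) {v : EuclideanSpace ℝ (Fin n)} (hv : v ≠ 0) :
    (inner ℝ (TE A v) v : ℝ) / ‖v‖ ^ 2 ≤ supR A :=
  le_ciSup (bddA A) (⟨v, hv⟩ : {x : EuclideanSpace ℝ (Fin n) // x ≠ 0})

lemma eig_le_supR (A : Matrix (Fin n) (Fin n) ℝ) {μ : ℝ}
    (h : HasEigenvalue (TE A) μ) : μ ≤ supR A := by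
  obtain ⟨v, hv, h0⟩ := h.exists_hasEigenvector
  have hvTE : TE A v = μ • v := Module.End.mem_eigenspace_iff.1 hv
  have hn : (0:ℝ) < ‖v‖ ^ 2 := by
    have : 0 < ‖v‖ := norm_pos_iff.mpr h0
    positivity
  have heq : (inner ℝ (TE A v) v : ℝ) = μ * ‖v‖ ^ 2 := by
    rw [hvTE, real_inner_smul_left, real_inner_self_eq_norm_sq]
  have hle := rayleigh_le_supR A h0
  rwa [heq, mul_div_assoc, div_self hn.ne', mul_one] at hle

lemma supR_hasEigenvalue [Nonempty (Fin n)] {A : Matrix (Fin n) (Fin n) ℝ} (hA : A.IsHermitian) :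
    HasEigenvalue (TE A) (supR A) := by
  have hsym : (TE A).IsSymmetric := Matrix.isHermitian_iff_isSymmetric.mp hA
  have : Nontrivial (EuclideanSpace ℝ (Fin n)) := by
    refine ⟨0, (WithLp.equiv 2 _).symm (fun _ => 1), fun h => ?_⟩
    have := congrFun (congrArg (WithLp.equiv 2 _) h) (Classical.arbitrary (Fin n))
    simp at this
  have := hsym.hasEigenvalue_iSup_of_finiteDimensional
  exact this

lemma eigen_of_max {A : Matrix (Fin n) (Fin n) ℝ} (hA : A.IsHermitian)
    {f : EuclideanSpace ℝ (Fin n)} (hf : f ≠ 0)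
    (hmax : ∀ z : EuclideanSpace ℝ (Fin n), z ≠ 0 →
      (inner ℝ (TE A z) z : ℝ) / ‖z‖ ^ 2 ≤ (inner ℝ (TE A f) f : ℝ) / ‖f‖ ^ 2) :
    TE A f = ((inner ℝ (TE A f) f : ℝ) / ‖f‖ ^ 2) • f := by
  have hsym : (TE A).IsSymmetric := Matrix.isHermitian_iff_isSymmetric.mp hA
  set T' : EuclideanSpace ℝ (Fin n) →L[ℝ] EuclideanSpace ℝ (Fin n) :=
    LinearMap.toContinuousLinearMap (TE A) with hT'
  have hsa : IsSelfAdjoint T' := by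
    rw [ContinuousLinearMap.isSelfAdjoint_iff_isSymmetric]
    exact hsym
  have hextr : IsMaxOn T'.reApplyInnerSelf (Metric.sphere (0 : EuclideanSpace ℝ (Fin n)) ‖f‖) f := by
    intro z hz
    have hnz : ‖z‖ = ‖f‖ := by simpa [dist_eq_norm] using hz
    have hz0 : z ≠ 0 := by
      intro h; rw [h] at hnz; simp [eq_comm] at hnz; exact hf (norm_eq_zero.mp hnz.symm)
    have hle := hmax z hz0
    have hfpos : (0:ℝ) < ‖f‖ ^ 2 := by
      have : 0 < ‖f‖ := norm_pos_iff.mpr hf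
      positivity
    have h2 : (inner ℝ (TE A z) z : ℝ) ≤ (inner ℝ (TE A f) f : ℝ) := by
      rw [div_le_div_iff₀ (by rw [hnz]; exact hfpos) hfpos, hnz] at hle
      exact le_of_mul_le_mul_right hle hfpos
    simpa [ContinuousLinearMap.reApplyInnerSelf, T'] using h2
  have := hsa.eq_smul_self_of_isLocalExtrOn (Or.inr hextr.localize)
  simpa [ContinuousLinearMap.rayleighQuotient, ContinuousLinearMap.reApplyInnerSelf, T'] using this

lemma hasEigenvalue_toLin'_iff (A : Matrix (Fin n) (Fin n) ℝ) (μ : ℝ) :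
    Module.End.HasEigenvalue (Matrix.toLin' A) μ ↔ ∃ v : Fin n → ℝ, v ≠ 0 ∧ A.mulVec v = μ • v := by
  rw [Module.End.hasEigenvalue_iff, Submodule.ne_bot_iff]
  constructor
  · rintro ⟨v, hv, h0⟩
    exact ⟨v, h0, by simpa [Matrix.toLin'_apply] using (Module.End.mem_eigenspace_iff.1 hv)⟩
  · rintro ⟨v, h0, hv⟩
    exact ⟨v, Module.End.mem_eigenspace_iff.2 (by simpa [Matrix.toLin'_apply] using hv), h0⟩

lemma hasEigenvalue_TE_iff (A : Matrix (Fin n) (Fin n) ℝ) (μ : ℝ) :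
    Module.End.HasEigenvalue (TE A) μ ↔ ∃ v : Fin n → ℝ, v ≠ 0 ∧ A.mulVec v = μ • v := by
  rw [Module.End.hasEigenvalue_iff, Submodule.ne_bot_iff]
  constructor
  · rintro ⟨v, hv, h0⟩
    refine ⟨(WithLp.equiv 2 _) v, by simpa using h0, ?_⟩
    have := Module.End.mem_eigenspace_iff.1 hv
    rw [TE, Matrix.toEuclideanLin_apply] at this
    simpa using congrArg (WithLp.equiv 2 _) this
  · rintro ⟨v, h0, hv⟩
    refine ⟨(WithLp.equiv 2 _).symm v, Module.End.mem_eigenspace_iff.2 ?_, by simpa using h0⟩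
    rw [TE, Matrix.toEuclideanLin_apply]
    simp [hv]
end Stmt7A

namespace Stmt7A
open Module.End Finset
variable {n : ℕ}

lemma specRad_eq [Nonempty (Fin n)] (G : SimpleGraph (Fin n)) : specRad G = supR (Amat G) := by
  have hherm := Amat_isHermitian G
  have hiff : ∀ μ : ℝ, Module.End.HasEigenvalue (Matrix.toLin' (Amat G)) μ ↔
      Module.End.HasEigenvalue (TE (Amat G)) μ := fun μ =>
    (hasEigenvalue_toLin'_iff _ μ).trans (hasEigenvalue_TE_iff _ μ).symm
  have hmem : supR (Amat G) ∈ {x : ℝ | Module.End.HasEigenvalue (Matrix.toLin' (Amat G)) x} :=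
    (hiff _).mpr (supR_hasEigenvalue hherm)
  have hub : ∀ μ ∈ {x : ℝ | Module.End.HasEigenvalue (Matrix.toLin' (Amat G)) x},
      μ ≤ supR (Amat G) := fun μ hμ => eig_le_supR _ ((hiff μ).mp hμ)
  unfold specRad
  exact le_antisymm (csSup_le ⟨_, hmem⟩ hub) (le_csSup ⟨_, hub⟩ hmem)

lemma qf_div_le_supR (A : Matrix (Fin n) (Fin n) ℝ) {g : Fin n → ℝ} (hg : g ≠ 0) :
    qf A g / (∑ i, g i * g i) ≤ supR A := by
  have h := rayleigh_le_supR A (cE_ne_zero hg)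
  rw [inner_TE_qf, norm_sq_eq] at h
  exact h

lemma exists_perron [Nonempty (Fin n)] (G : SimpleGraph (Fin n)) (hconn : G.Connected) :
    ∃ f : Fin n → ℝ, (∀ i, 0 < f i) ∧
      ∀ i, (∑ j, Amat G i j * f j) = supR (Amat G) * f i := by
  set A := Amat G with hAdef
  have hherm := Amat_isHermitian G
  obtain ⟨u, hu, hu0⟩ := (supR_hasEigenvalue (A := A) hherm).exists_hasEigenvector
  have huTE : TE A u = supR A • u := Module.End.mem_eigenspace_iff.1 hu
  set ρ := supR A with hρ
  set f : Fin n → ℝ := fun i => |u i| with hf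
  have hfne : f ≠ 0 := by
    intro h
    exact hu0 (by ext i; simpa using abs_eq_zero.mp (by simpa [hf] using congrFun h i))
  have hnorm : ‖cE f‖^2 = ‖u‖^2 := by
    rw [norm_sq_eq, norm_sq_eq]
    apply Finset.sum_congr rfl
    intro i _
    show |u i| * |u i| = u i * u i
    exact abs_mul_abs_self (u i)
  have hnorm_pos : (0:ℝ) < ‖u‖^2 := by
    have : 0 < ‖u‖ := norm_pos_iff.mpr hu0
    positivity
  have hinneru : (inner ℝ (TE A u) u : ℝ) = ρ * ‖u‖^2 := by
    rw [huTE, real_inner_smul_left, real_inner_self_eq_norm_sq]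
  have hcomp : (inner ℝ (TE A u) u : ℝ) ≤ (inner ℝ (TE A (cE f)) (cE f) : ℝ) := by
    rw [inner_TE, inner_TE]
    apply Finset.sum_le_sum
    intro i _
    calc (∑ j, A i j * u j) * u i ≤ |(∑ j, A i j * u j) * u i| := le_abs_self _
      _ = |∑ j, A i j * u j| * |u i| := abs_mul _ _
      _ ≤ (∑ j, A i j * |u j|) * |u i| := by
          apply mul_le_mul_of_nonneg_right ?_ (abs_nonneg _)
          calc |∑ j, A i j * u j| ≤ ∑ j, |A i j * u j| := Finset.abs_sum_le_sum_abs _ _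
            _ = ∑ j, A i j * |u j| := by
                apply Finset.sum_congr rfl
                intro j _
                rw [abs_mul, abs_of_nonneg (Amat_nonneg G i j)]
      _ = (∑ j, A i j * (cE f) j) * (cE f) i := rfl
  have hfE0 : cE f ≠ 0 := cE_ne_zero hfne
  have hray_le : (inner ℝ (TE A (cE f)) (cE f) : ℝ) / ‖cE f‖^2 ≤ ρ := rayleigh_le_supR A hfE0
  have hray_eq : (inner ℝ (TE A (cE f)) (cE f) : ℝ) / ‖cE f‖^2 = ρ := by
    apply le_antisymm hray_le
    rw [le_div_iff₀ (by rw [hnorm]; exact hnorm_pos), hnorm]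
    calc ρ * ‖u‖^2 = (inner ℝ (TE A u) u : ℝ) := hinneru.symm
      _ ≤ _ := hcomp
  have hmax : ∀ z : EuclideanSpace ℝ (Fin n), z ≠ 0 →
      (inner ℝ (TE A z) z : ℝ) / ‖z‖ ^ 2 ≤ (inner ℝ (TE A (cE f)) (cE f) : ℝ) / ‖cE f‖ ^ 2 := by
    intro z hz
    rw [hray_eq]
    exact rayleigh_le_supR A hz
  have heigf := eigen_of_max hherm hfE0 hmax
  rw [hray_eq] at heigf
  have heig : ∀ i, (∑ j, A i j * f j) = ρ * f i := by
    intro i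
    have h1 : TE A (cE f) i = (ρ • (cE f)) i := by rw [heigf]
    rw [TE_apply] at h1
    exact h1
  have hfnn : ∀ i, 0 ≤ f i := fun i => abs_nonneg _
  have step : ∀ i, f i = 0 → ∀ j, G.Adj i j → f j = 0 := by
    intro i hi j hij
    have hrow : ∑ v, A i v * f v = 0 := by
      have h2 := heig i
      rwa [hi, mul_zero] at h2
    have hz := (Finset.sum_eq_zero_iff_of_nonneg
      (fun v _ => mul_nonneg (Amat_nonneg G i v) (hfnn v))).mp hrow j (Finset.mem_univ j)
    rw [Amat_apply, ind_pos hij, one_mul] at hz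
    exact hz
  have walkzero : ∀ (i j : Fin n), G.Walk i j → f i = 0 → f j = 0 := by
    intro i j w
    induction w with
    | nil => exact id
    | cons h p ih => intro hi; exact ih (step _ hi _ h)
  have hpos : ∀ i, 0 < f i := by
    intro i
    rcases (hfnn i).lt_or_eq with h | h
    · exact h
    · exfalso
      apply hfne
      funext j
      exact walkzero i j (hconn.preconnected i j).some h.symm
  exact ⟨f, hpos, heig⟩

end Stmt7A

/-- for connected `G`, ρ(S_{xy}(G)) > ρ(G) unless S_{xy}(G) ≅ G. -/
theorem stmt7 (n : ℕ) (G : SimpleGraph (Fin n)) (hconn : G.Connected) (x y : Fin n) :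
    Nonempty (shiftGraph G x y ≃g G) ∨ specRad G < specRad (shiftGraph G x y) := by
  classical
  haveI : Nonempty (Fin n) := ⟨x⟩
  by_cases hM : ∀ v, ¬ Stmt7A.mv G x y v
  · left
    rw [Stmt7A.shiftGraph_eq_self G x y hM]
    exact ⟨⟨Equiv.refl _, Iff.rfl⟩⟩
  · push_neg at hM
    obtain ⟨b, hb⟩ := hM
    have hxy : x ≠ y := Stmt7A.mv_ne G hb
    by_cases hA : ∀ v, G.Adj v x → v = y ∨ G.Adj v y
    · left
      exact ⟨⟨Equiv.swap x y, fun {a c} =>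
        Stmt7A.swap_iso_forward G x y hxy hA a c⟩⟩
    · right
      push_neg at hA
      obtain ⟨a, ha1, ha2, ha3⟩ : ∃ a, G.Adj a x ∧ a ≠ y ∧ ¬ G.Adj a y := by
        obtain ⟨a, ha1, ha2, ha3⟩ := hA
        exact ⟨a, ha1, ha2, ha3⟩
      rw [Stmt7A.specRad_eq G, Stmt7A.specRad_eq (shiftGraph G x y)]
      obtain ⟨f, hfpos, heig⟩ := Stmt7A.exists_perron G hconn
      set A := Stmt7A.Amat G with hAdef
      set A' := Stmt7A.Amat (shiftGraph G x y) with hA'def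
      set ρ := Stmt7A.supR A with hρdef
      set c := ∑ i, f i * f i with hc
      have hcpos : 0 < c := by
        rw [hc]
        exact Finset.sum_pos (fun i _ => mul_pos (hfpos i) (hfpos i)) Finset.univ_nonempty
      have hfne : f ≠ 0 := by
        intro h
        exact (hfpos x).ne' (by simpa using congrFun h x)
      have hqA : Stmt7A.qf A f = ρ * c := by
        unfold Stmt7A.qf
        rw [hc, Finset.mul_sum]
        apply Finset.sum_congr rfl
        intro i _
        rw [heig i]; ring
      set S := ∑ v ∈ Finset.univ.filter (Stmt7A.mv G x y), f v with hS
      have hSpos : 0 < S := by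
        rw [hS]
        apply Finset.sum_pos' (fun v _ => (hfpos v).le)
        exact ⟨b, Finset.mem_filter.2 ⟨Finset.mem_univ b, hb⟩, hfpos b⟩
      have hqi : Stmt7A.qf A' f = Stmt7A.qf A f + 2 * (f x - f y) * S :=
        Stmt7A.qf_diff A A' (Stmt7A.mv G x y) x y
          (fun u v => Stmt7A.hBi G x y hxy u v) f
      rcases lt_trichotomy (f x) (f y) with hlt | heq | hgt
      · -- f x < f y : use the swapped test vector
        set σ := Equiv.swap x y with hσ
        set g : Fin n → ℝ := fun i => f (σ i) with hg
        have hswap : ∀ i, σ (σ i) = i := fun i => Equiv.swap_apply_self x y i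
        have hqg : Stmt7A.qf A' g = Stmt7A.qf (Matrix.of fun u v => A' (σ u) (σ v)) f :=
          Stmt7A.qf_reindex A' σ hswap f
        set K := ∑ v ∈ Finset.univ.filter (Stmt7A.mv G y x), f v with hK
        have hqii : Stmt7A.qf (Matrix.of fun u v => A' (σ u) (σ v)) f
            = Stmt7A.qf A f + 2 * (f y - f x) * K :=
          Stmt7A.qf_diff A _ (Stmt7A.mv G y x) y x
            (fun u v => Stmt7A.hBii G x y hxy u v) f
        have hKpos : 0 < K := by
          rw [hK]
          apply Finset.sum_pos' (fun v _ => (hfpos v).le)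
          exact ⟨a, Finset.mem_filter.2 ⟨Finset.mem_univ a, ha2, ha1, ha3⟩, hfpos a⟩
        have hgc : ∑ i, g i * g i = c := by
          rw [hc, hg]
          exact Equiv.sum_comp σ (fun i => f i * f i)
        have hgne : g ≠ 0 := by
          intro h
          have h1 : g x = 0 := by simpa using congrFun h x
          have h2 : g x = f y := by
            show f (σ x) = f y
            congr 1
            rw [hσ]
            exact Equiv.swap_apply_left x y
          rw [h2] at h1
          exact (hfpos y).ne' h1
        have hmain : ρ * c < Stmt7A.qf A' g := by
          rw [hqg, hqii, hqA]
          have : 0 < 2 * (f y - f x) * K := by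
            apply mul_pos (by linarith) hKpos
          linarith
        have h2 := Stmt7A.qf_div_le_supR A' hgne
        rw [hgc] at h2
        have h3 : ρ < Stmt7A.qf A' g / c := (lt_div_iff₀ hcpos).mpr (by linarith)
        exact h3.trans_le h2
      · -- f x = f y : equality case, contradiction via eigenvector equation at y
        have hq : Stmt7A.qf A' f = ρ * c := by rw [hqi, hqA, heq]; ring
        have hle : ρ ≤ Stmt7A.supR A' := by
          have h2 := Stmt7A.qf_div_le_supR A' hfne
          rw [← hc, hq, mul_div_assoc, div_self hcpos.ne', mul_one] at h2
          exact h2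
        refine lt_of_le_of_ne hle fun hcontra => ?_
        have hnormf : ‖Stmt7A.cE f‖^2 = c := by
          rw [Stmt7A.norm_sq_eq, hc]
          simp only [Stmt7A.cE_apply]
        have hrf : (inner ℝ (Stmt7A.TE A' (Stmt7A.cE f)) (Stmt7A.cE f) : ℝ) / ‖Stmt7A.cE f‖^2 = ρ := by
          rw [Stmt7A.inner_TE_qf, hnormf, hq, mul_div_assoc, div_self hcpos.ne', mul_one]
        have hraymax : ∀ z : EuclideanSpace ℝ (Fin n), z ≠ 0 →
            (inner ℝ (Stmt7A.TE A' z) z : ℝ) / ‖z‖ ^ 2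
              ≤ (inner ℝ (Stmt7A.TE A' (Stmt7A.cE f)) (Stmt7A.cE f) : ℝ) / ‖Stmt7A.cE f‖ ^ 2 := by
          intro z hz
          rw [hrf, hcontra]
          exact Stmt7A.rayleigh_le_supR A' hz
        have heigf := Stmt7A.eigen_of_max (Stmt7A.Amat_isHermitian _)
          (Stmt7A.cE_ne_zero hfne) hraymax
        rw [hrf] at heigf
        have heig' : ∀ i, (∑ j, A' i j * f j) = ρ * f i := by
          intro i
          have h1 : Stmt7A.TE A' (Stmt7A.cE f) i = (ρ • (Stmt7A.cE f)) i := by rw [heigf]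
          rw [Stmt7A.TE_apply] at h1
          exact h1
        have hrowy : ∀ v, A' y v = A y v - Stmt7A.ind (Stmt7A.mv G x y v) := by
          intro v
          rw [hA'def, hAdef]
          have hs := Stmt7A.hBi G x y hxy y v
          unfold Stmt7A.stmtI at hs
          have e1 : Stmt7A.ind (y = x ∧ Stmt7A.mv G x y v) = 0 :=
            Stmt7A.ind_neg (fun h => hxy h.1.symm)
          have e2 : Stmt7A.ind (v = x ∧ Stmt7A.mv G x y y) = 0 :=
            Stmt7A.ind_neg (fun h => Stmt7A.mv_not_y G x y h.2)
          have e3 : Stmt7A.ind (v = y ∧ Stmt7A.mv G x y y) = 0 :=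
            Stmt7A.ind_neg (fun h => Stmt7A.mv_not_y G x y h.2)
          rw [e1, e2, e3] at hs
          by_cases hm : Stmt7A.mv G x y v
          · have e4 : Stmt7A.ind (y = y ∧ Stmt7A.mv G x y v) = 1 := Stmt7A.ind_pos ⟨rfl, hm⟩
            rw [e4] at hs
            rw [hs, Stmt7A.ind_pos hm]; ring
          · have e4 : Stmt7A.ind (y = y ∧ Stmt7A.mv G x y v) = 0 :=
              Stmt7A.ind_neg (fun h => hm h.2)
            rw [e4] at hs
            rw [hs, Stmt7A.ind_neg hm]; ring
        have hsum : ∑ v, A' y v * f v = (∑ v, A y v * f v) - S := by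
          have : ∀ v, A' y v * f v = A y v * f v - Stmt7A.ind (Stmt7A.mv G x y v) * f v := by
            intro v; rw [hrowy v]; ring
          simp only [this]
          rw [Finset.sum_sub_distrib, Stmt7A.indsum, hS]
        have h1 := heig' y
        rw [hsum, heig y] at h1
        have : S = 0 := by linarith
        exact hSpos.ne' this
      · -- f y < f x : direct test vector
        have hmain : ρ * c < Stmt7A.qf A' f := by
          rw [hqi, hqA]
          have : 0 < 2 * (f x - f y) * S := mul_pos (by linarith) hSpos
          linarith
        have h2 := Stmt7A.qf_div_le_supR A' hfne
        rw [← hc] at h2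
        have h3 : ρ < Stmt7A.qf A' f / c := (lt_div_iff₀ hcpos).mpr (by linarith)
        exact h3.trans_le h2
end
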